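/- arXiv:2504.00868 — 15 statements merged into one kernel-verified Lean document; each statement's English description precedes it below -/
import Mathlib

section
/- Let F be a field of characteristic ≠ 2 and J₂ the Jordan algebra of a nondegenerate symmetric bilinear form on a 2-dimensional space. (i) If the element a = λ·1 + α·x + β·y of J₂ is R-invertible, i.e. the right multiplication operator R_a : z ↦ z·a is bijective, then λ ≠ 0. (ii) The element a = 1 + α·x + β·y is R-invertible if and only if 1 − 2αβ ≠ 0. -/
open Module

section Defs

variable (F : Type*) [Field F]

/-- `I` is a (two-sided) ideal of the algebra `(A, mul)`. -/
def IsIdeal {A : Type*} [AddCommGroup A] [Module F A]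
    (mul : A → A → A) (I : Submodule F A) : Prop :=
  ∀ a : A, ∀ u ∈ I, mul a u ∈ I ∧ mul u a ∈ I

/-- The (not necessarily associative or unital) algebra `(A, mul)` is simple:
its multiplication is nonzero and its only ideals are `⊥` and `⊤`. -/
def IsSimpleAlg {A : Type*} [AddCommGroup A] [Module F A]
    (mul : A → A → A) : Prop :=
  (∃ u v : A, mul u v ≠ 0) ∧
  ∀ I : Submodule F A, IsIdeal F mul I → I = ⊥ ∨ I = ⊤

/-- The algebra `(A, mul)` has nil-rank `k`: there are `k` linearly independent
nil-elements of index 2, but no `k + 1` such elements. -/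
def HasNilRank {A : Type*} [AddCommGroup A] [Module F A]
    (mul : A → A → A) (k : ℕ) : Prop :=
  (∃ v : Fin k → A, LinearIndependent F v ∧ ∀ i, mul (v i) (v i) = 0) ∧
  ∀ v : Fin (k + 1) → A, LinearIndependent F v → ∃ i, mul (v i) (v i) ≠ 0

/-- The algebras `(A, mulA)` and `(B, mulB)` are isomorphic. -/
def AlgIso {A B : Type*} [AddCommGroup A] [Module F A] [AddCommGroup B] [Module F B]
    (mulA : A → A → A) (mulB : B → B → B) : Prop :=
  ∃ φ : A ≃ₗ[F] B, ∀ u v : A, φ (mulA u v) = mulB (φ u) (φ v)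

/-- The algebras `(A, mulA)` and `(B, mulB)` are isotopic. -/
def Isotopic {A B : Type*} [AddCommGroup A] [Module F A] [AddCommGroup B] [Module F B]
    (mulA : A → A → A) (mulB : B → B → B) : Prop :=
  ∃ φ ψ ξ : A ≃ₗ[F] B, ∀ u v : A, mulB (φ u) (ψ v) = ξ (mulA u v)

/-- `(e, x, y)` is a canonical basis of `A` realizing the unital commutative algebra
`C(α, β, γ)`: `e` is a multiplicative identity, `x² = y² = 0`,
and `xy = yx = α·1 + β·x + γ·y`. (`C(1,0,0)` is the Jordan algebra `J₂`.) -/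
def IsCAlg {A : Type*} [AddCommGroup A] [Module F A]
    (m : A →ₗ[F] A →ₗ[F] A) (α β γ : F) (e x y : A) : Prop :=
  LinearIndependent F ![e, x, y] ∧
  Submodule.span F {e, x, y} = ⊤ ∧
  (∀ u, m e u = u) ∧ (∀ u, m u e = u) ∧
  m x x = 0 ∧ m y y = 0 ∧
  m x y = α • e + β • x + γ • y ∧ m y x = α • e + β • x + γ • y

end Defs

/-- In the Jordan algebra `J₂ = C(1,0,0)` over a field of
characteristic `≠ 2`:
(i) if `a = λ•1 + α•x + β•y` is `R`-invertible (the right multiplication operator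
`z ↦ z·a` is bijective), then `λ ≠ 0`;
(ii) `a = 1 + α•x + β•y` is `R`-invertible iff `1 - 2αβ ≠ 0`. -/
theorem stmt1 {F : Type*} [Field F] (hchar : (2 : F) ≠ 0)
    {A : Type*} [AddCommGroup A] [Module F A]
    (m : A →ₗ[F] A →ₗ[F] A) (e x y : A)
    (hJ : IsCAlg F m 1 0 0 e x y) :
    (∀ lam α β : F,
      Function.Bijective (fun z : A => m z (lam • e + α • x + β • y)) → lam ≠ 0) ∧
    (∀ α β : F,
      Function.Bijective (fun z : A => m z (e + α • x + β • y)) ↔ 1 - 2 * α * β ≠ 0) := by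

  obtain ⟨hli, hspan, he, he', hxx, hyy, hxy, hyx⟩ := hJ
  have hxy' : m x y = e := by simpa using hxy
  have hyx' : m y x = e := by simpa using hyx
  -- coefficient extraction from linear independence
  have hcoef : ∀ c u v : F, c • e + u • x + v • y = 0 → c = 0 ∧ u = 0 ∧ v = 0 := by
    intro c u v h
    have := Fintype.linearIndependent_iff.mp hli ![c, u, v] (by
      simpa [Fin.sum_univ_three] using h)
    exact ⟨this 0, this 1, this 2⟩
  -- every element is a combination
  have hrepr : ∀ z : A, ∃ c u v : F, z = c • e + u • x + v • y := by
    intro z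
    have hz : z ∈ Submodule.span F ({e, x, y} : Set A) := hspan ▸ Submodule.mem_top
    rw [show ({e, x, y} : Set A) = insert e {x, y} from rfl, Submodule.mem_span_insert] at hz
    obtain ⟨c, w, hw, hzw⟩ := hz
    obtain ⟨u, v, huv⟩ := Submodule.mem_span_pair.mp hw
    exact ⟨c, u, v, by rw [hzw, ← huv, add_assoc]⟩
  -- multiplication formula
  have hmul : ∀ c u v lam α β : F,
      m (c • e + u • x + v • y) (lam • e + α • x + β • y)
        = (c * lam + u * β + v * α) • e + (c * α + u * lam) • x + (c * β + v * lam) • y := by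
    intro c u v lam α β
    simp only [map_add, map_smul, LinearMap.add_apply, LinearMap.smul_apply,
      he, he', hxx, hyy, hxy', hyx']
    module
  have hene : e ≠ 0 := by
    have := hli.ne_zero 0
    simpa using this
  constructor
  · -- part (i)
    intro lam α β hbij hlam
    subst hlam
    by_cases hab : α = 0 ∧ β = 0
    · have h0 : m e ((0 : F) • e + α • x + β • y) = m 0 ((0 : F) • e + α • x + β • y) := by
        simp [hab.1, hab.2]
      exact hene (hbij.injective h0)
    · have hz : m ((0 : F) • e + α • x + (-β) • y) ((0 : F) • e + α • x + β • y)
          = m 0 ((0 : F) • e + α • x + β • y) := by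
        rw [hmul]; simp; ring_nf; simp
      have := hbij.injective hz
      obtain ⟨_, h1, h2⟩ := hcoef _ _ _ this
      exact hab ⟨h1, by simpa using h2⟩
  · -- part (ii)
    intro α β
    have hone : (e + α • x + β • y) = (1 : F) • e + α • x + β • y := by rw [one_smul]
    constructor
    · intro hbij hd
      have hd' : 1 - 2 * α * β = 0 := hd
      have hz : m ((1 : F) • e + (-α) • x + (-β) • y) (e + α • x + β • y)
          = m 0 (e + α • x + β • y) := by
        rw [hone, hmul]
        have h1 : 1 * 1 + -α * β + -β * α = 0 := by linear_combination hd'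
        rw [h1]; simp
      have := hbij.injective hz
      obtain ⟨h1, _, _⟩ := hcoef _ _ _ this
      exact one_ne_zero h1
    · intro hd
      constructor
      · intro z w hzw
        obtain ⟨c, u, v, rfl⟩ := hrepr z
        obtain ⟨c', u', v', rfl⟩ := hrepr w
        simp only [hone, hmul] at hzw
        have h0 : (c * 1 + u * β + v * α - (c' * 1 + u' * β + v' * α)) • e
            + (c * α + u * 1 - (c' * α + u' * 1)) • x
            + (c * β + v * 1 - (c' * β + v' * 1)) • y = 0 := by
          have h := sub_eq_zero.mpr hzw
          rw [← h]; module
        obtain ⟨h1, h2, h3⟩ := hcoef _ _ _ h0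
        have hc : c - c' = 0 := by
          have h4 : (c - c') * (1 - 2 * α * β) = 0 := by
            linear_combination h1 - β * h2 - α * h3
          exact (mul_eq_zero.mp h4).resolve_right hd
        have hu : u = u' := by linear_combination h2 - α * hc
        have hv : v = v' := by linear_combination h3 - β * hc
        have hc' : c = c' := by linear_combination hc
        rw [hc', hu, hv]
      · intro w
        obtain ⟨c, u, v, rfl⟩ := hrepr w
        set d := 1 - 2 * α * β with hdd
        refine ⟨((c - u * β - v * α) / d) • e
          + (u - ((c - u * β - v * α) / d) * α) • x
          + (v - ((c - u * β - v * α) / d) * β) • y, ?_⟩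
        simp only [hone, hmul]
        match_scalars <;> field_simp <;> ring
end

section
/- Let F be a field of characteristic ≠ 2. Every nil-element of index 2 of the algebra J₂ lies in the set Fx ∪ Fy (scalar multiples of x or of y). Consequently, the nil-rank of J₂ equals 2. -/
open Module

/-- Over a field of characteristic `≠ 2`, every nil-element of
index 2 of `J₂ = C(1,0,0)` lies in `Fx ∪ Fy`; consequently the nil-rank of `J₂`
equals `2`. -/
theorem stmt2 {F : Type*} [Field F] (hchar : (2 : F) ≠ 0)
    {A : Type*} [AddCommGroup A] [Module F A]
    (m : A →ₗ[F] A →ₗ[F] A) (e x y : A)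
    (hJ : IsCAlg F m 1 0 0 e x y) :
    (∀ u : A, u ≠ 0 → m u u = 0 → (∃ c : F, u = c • x) ∨ (∃ c : F, u = c • y)) ∧
    HasNilRank F (fun u v : A => m u v) 2 := by
  obtain ⟨hli, hspan, he, he', hxx, hyy, hxy, hyx⟩ := hJ
  simp only [one_smul, zero_smul, add_zero] at hxy hyx
  have hrepr : ∀ u : A, ∃ a b c : F, u = a • e + b • x + c • y := by
    intro u
    have hu : u ∈ Submodule.span F {e, x, y} := hspan ▸ Submodule.mem_top
    rw [Submodule.mem_span_insert] at hu
    obtain ⟨a, z, hz, hu⟩ := hu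
    rw [Submodule.mem_span_insert] at hz
    obtain ⟨b, w, hw, hz⟩ := hz
    rw [Submodule.mem_span_singleton] at hw
    obtain ⟨c, hw⟩ := hw
    refine ⟨a, b, c, ?_⟩
    rw [hu, hz, ← hw, add_assoc]
  have hsq : ∀ a b c : F, m (a • e + b • x + c • y) (a • e + b • x + c • y)
      = (a * a + 2 * (b * c)) • e + (2 * (a * b)) • x + (2 * (a * c)) • y := by
    intro a b c
    simp only [map_add, map_smul, LinearMap.add_apply, LinearMap.smul_apply,
      he, he', hxx, hyy, hxy, hyx, smul_smul, smul_zero]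
    module
  have hcoef : ∀ a b c : F, a • e + b • x + c • y = 0 → a = 0 ∧ b = 0 ∧ c = 0 := by
    intro a b c h
    have h2 := Fintype.linearIndependent_iff.mp hli ![a, b, c]
      (by simpa [Fin.sum_univ_three] using h)
    exact ⟨h2 0, h2 1, h2 2⟩
  have part1 : ∀ u : A, u ≠ 0 → m u u = 0 →
      (∃ c : F, u = c • x) ∨ (∃ c : F, u = c • y) := by
    intro u hu h0
    obtain ⟨a, b, c, rfl⟩ := hrepr u
    rw [hsq] at h0
    obtain ⟨h1, h2, h3⟩ := hcoef _ _ _ h0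
    have hab : a * b = 0 := by
      rcases mul_eq_zero.mp h2 with h | h
      · exact absurd h hchar
      · exact h
    have hac : a * c = 0 := by
      rcases mul_eq_zero.mp h3 with h | h
      · exact absurd h hchar
      · exact h
    have ha : a = 0 := by
      by_contra ha
      have hb : b = 0 := by
        rcases mul_eq_zero.mp hab with h | h
        · exact absurd h ha
        · exact h
      have hc : c = 0 := by
        rcases mul_eq_zero.mp hac with h | h
        · exact absurd h ha
        · exact h
      rw [hb, hc] at h1
      simp only [mul_zero, add_zero] at h1
      exact ha (mul_self_eq_zero.mp h1)
    subst ha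
    simp only [mul_zero, zero_mul, zero_add] at h1
    have hbc : b * c = 0 := by
      rcases mul_eq_zero.mp h1 with h | h
      · exact absurd h hchar
      · exact h
    rcases mul_eq_zero.mp hbc with hb | hc
    · right
      exact ⟨c, by simp [hb]⟩
    · left
      exact ⟨b, by simp [hc]⟩
  refine ⟨part1, ?_, ?_⟩
  · refine ⟨![x, y], ?_, ?_⟩
    · have heq : ![x, y] = ![e, x, y] ∘ ![1, 2] := by
        ext i; fin_cases i <;> rfl
      rw [heq]
      exact hli.comp _ (by decide)
    · intro i; fin_cases i
      · exact hxx
      · exact hyy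
  · intro v hv
    by_contra hcon
    push_neg at hcon
    have key : ∀ (w : A) (i j : Fin 3) (a b : F), i ≠ j →
        v i = a • w → v j = b • w → False := by
      intro w i j a b hij hi hj
      have hj0 : v j ≠ 0 := hv.ne_zero j
      have hb : b ≠ 0 := fun h => hj0 (by simp [hj, h])
      have hinj : Function.Injective ![i, j] := by
        intro s t h
        fin_cases s <;> fin_cases t <;>
          simp only [Matrix.cons_val_zero, Matrix.cons_val_one, Matrix.head_cons] at h <;>
          first | rfl | exact absurd h hij | exact absurd h.symm hij
      have hv2 := hv.comp ![i, j] hinj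
      have hrel : b • v i + (-a) • v j = 0 := by
        rw [hi, hj]
        module
      have := Fintype.linearIndependent_iff.mp hv2 ![b, -a]
        (by simpa [Fin.sum_univ_two, Function.comp_apply] using hrel)
      exact hb (this 0)
    have h0 := part1 (v 0) (hv.ne_zero 0) (hcon 0)
    have h1 := part1 (v 1) (hv.ne_zero 1) (hcon 1)
    have h2 := part1 (v 2) (hv.ne_zero 2) (hcon 2)
    rcases h0 with ⟨a, ha⟩ | ⟨a, ha⟩ <;> rcases h1 with ⟨b, hb⟩ | ⟨b, hb⟩ <;>
      rcases h2 with ⟨c, hc⟩ | ⟨c, hc⟩ <;>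
      first
      | exact key x 0 1 a b (by decide) ha hb
      | exact key y 0 1 a b (by decide) ha hb
      | exact key x 0 2 a c (by decide) ha hc
      | exact key y 0 2 a c (by decide) ha hc
      | exact key x 1 2 b c (by decide) hb hc
      | exact key y 1 2 b c (by decide) hb hc
end

section
/- Let F be a field. The algebra C₂ over F has no multiplicative identity element. -/
open Module

/-- The commutative algebra `C₂` with basis `(a, b, c)` and
multiplication `a² = b`, `ab = ba = a`, `ac = ca = c`, `b² = c² = 0`, `bc = cb = b`
has no multiplicative identity element. -/
theorem stmt3 {F : Type*} [Field F] {A : Type*} [AddCommGroup A] [Module F A]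
    (m : A →ₗ[F] A →ₗ[F] A) (a b c : A)
    (hbasis : LinearIndependent F ![a, b, c])
    (hspan : Submodule.span F {a, b, c} = ⊤)
    (haa : m a a = b) (hab : m a b = a) (hba : m b a = a)
    (hac : m a c = c) (hca : m c a = c)
    (hbb : m b b = 0) (hcc : m c c = 0)
    (hbc : m b c = b) (hcb : m c b = b) :
    ¬ ∃ e : A, ∀ u : A, m e u = u ∧ m u e = u := by
  rintro ⟨e, he⟩
  have hmem : e ∈ Submodule.span F ({a, b, c} : Set A) := hspan ▸ Submodule.mem_top
  rw [Submodule.mem_span_insert] at hmem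
  obtain ⟨α, z, hz, rfl⟩ := hmem
  rw [Submodule.mem_span_insert] at hz
  obtain ⟨β, w, hw, rfl⟩ := hz
  rw [Submodule.mem_span_singleton] at hw
  obtain ⟨γ, rfl⟩ := hw
  have h1 : m (α • a + (β • b + γ • c)) a = a := (he a).1
  simp only [map_add, map_smul, LinearMap.add_apply, LinearMap.smul_apply,
    haa, hba, hca] at h1
  have h0 : (β - 1) • a + α • b + γ • c = 0 := by
    rw [sub_smul, one_smul]
    linear_combination (norm := module) h1
  have key := (Fintype.linearIndependent_iff.mp hbasis) ![β - 1, α, γ] (by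
    rw [Fin.sum_univ_three]
    simpa using h0)
  have hβ : β - 1 = 0 := by simpa using key 0
  have hα : α = 0 := by simpa using key 1
  have hγ : γ = 0 := by simpa using key 2
  have hβ' : β = 1 := sub_eq_zero.mp hβ
  have h2 := (he b).1
  simp only [hα, hβ', hγ, zero_smul, one_smul, zero_add, add_zero, hbb] at h2
  exact hbasis.ne_zero 1 (by simpa using h2.symm)
end

section
/- Let F be a field of characteristic ≠ 2. Every nil-element of index 2 of the algebra C₂ lies in the set Fb ∪ Fc (scalar multiples of b or of c). Consequently, the nil-rank of C₂ equals 2. -/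
open Module

/-- Over a field of characteristic `≠ 2`, every nil-element of
index 2 of the algebra `C₂` lies in `Fb ∪ Fc`; consequently the nil-rank of `C₂`
equals `2`. -/
theorem stmt4 {F : Type*} [Field F] (hchar : (2 : F) ≠ 0)
    {A : Type*} [AddCommGroup A] [Module F A]
    (m : A →ₗ[F] A →ₗ[F] A) (a b c : A)
    (hbasis : LinearIndependent F ![a, b, c])
    (hspan : Submodule.span F {a, b, c} = ⊤)
    (haa : m a a = b) (hab : m a b = a) (hba : m b a = a)
    (hac : m a c = c) (hca : m c a = c)
    (hbb : m b b = 0) (hcc : m c c = 0)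
    (hbc : m b c = b) (hcb : m c b = b) :
    (∀ u : A, u ≠ 0 → m u u = 0 → (∃ t : F, u = t • b) ∨ (∃ t : F, u = t • c)) ∧
    HasNilRank F (fun u v : A => m u v) 2 := by
  have hmem : ∀ u : A, ∃ x y z : F, u = x • a + y • b + z • c := by
    intro u
    have h : u ∈ Submodule.span F {a, b, c} := hspan ▸ Submodule.mem_top
    rw [Submodule.mem_span_insert] at h
    obtain ⟨x, w, hw, rfl⟩ := h
    rw [Submodule.mem_span_insert] at hw
    obtain ⟨y, w2, hw2, rfl⟩ := hw
    rw [Submodule.mem_span_singleton] at hw2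
    obtain ⟨z, rfl⟩ := hw2
    exact ⟨x, y, z, by abel⟩
  have hsq : ∀ x y z : F, m (x • a + y • b + z • c) (x • a + y • b + z • c)
      = (2*(x*y)) • a + (x*x + 2*(y*z)) • b + (2*(x*z)) • c := by
    intro x y z
    simp only [map_add, map_smul, LinearMap.add_apply, LinearMap.smul_apply,
      haa, hab, hba, hac, hca, hbb, hcc, hbc, hcb, smul_smul, smul_zero]
    module
  have key : ∀ u : A, u ≠ 0 → m u u = 0 → (∃ t : F, u = t • b) ∨ (∃ t : F, u = t • c) := by
    intro u hu h0
    obtain ⟨x, y, z, rfl⟩ := hmem u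
    rw [hsq] at h0
    have hcoef : ∀ i, (![2*(x*y), x*x + 2*(y*z), 2*(x*z)] : Fin 3 → F) i = 0 := by
      rw [Fintype.linearIndependent_iff] at hbasis
      apply hbasis
      simp [Fin.sum_univ_three]
      convert h0 using 2
    have h1 : x*y = 0 := by
      have := hcoef 0; simp only [Matrix.cons_val_zero] at this
      rcases mul_eq_zero.mp this with h | h; exact absurd h hchar; exact h
    have h3 : x*z = 0 := by
      have := hcoef 2; simp only [Matrix.cons_val_two, Matrix.tail_cons, Matrix.head_cons] at this
      rcases mul_eq_zero.mp this with h | h; exact absurd h hchar; exact h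
    have h2 : x*x + 2*(y*z) = 0 := by have := hcoef 1; simpa using this
    by_cases hx : x = 0
    · subst hx
      have hyz : y*z = 0 := by
        have : (2:F)*(y*z) = 0 := by linear_combination h2
        rcases mul_eq_zero.mp this with h | h
        · exact absurd h hchar
        · exact h
      rcases mul_eq_zero.mp hyz with hy | hz
      · right; exact ⟨z, by simp [hy]⟩
      · left; exact ⟨y, by simp [hz]⟩
    · exfalso
      have hy : y = 0 := by rcases mul_eq_zero.mp h1 with h|h; exact absurd h hx; exact h
      have hz : z = 0 := by rcases mul_eq_zero.mp h3 with h|h; exact absurd h hx; exact h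
      rw [hy, hz] at h2
      have : x * x = 0 := by linear_combination h2
      exact hx (by rcases mul_eq_zero.mp this with h|h <;> exact h)
  refine ⟨key, ⟨![b, c], ?_, ?_⟩, ?_⟩
  · have hinj : Function.Injective (![1, 2] : Fin 2 → Fin 3) := by decide
    have := hbasis.comp _ hinj
    convert this using 1
    funext i; fin_cases i <;> rfl
  · intro i; fin_cases i <;> simpa
  · intro v hv
    by_contra hcon
    push_neg at hcon
    have hW : ∀ i, v i ∈ Submodule.span F ({b, c} : Set A) := by
      intro i
      rcases key (v i) (hv.ne_zero i) (hcon i) with ⟨t, ht⟩ | ⟨t, ht⟩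
      · rw [ht]
        exact Submodule.smul_mem _ _ (Submodule.subset_span (by simp))
      · rw [ht]
        exact Submodule.smul_mem _ _ (Submodule.subset_span (by simp))
    set W := Submodule.span F ({b, c} : Set A)
    haveI : FiniteDimensional F W := FiniteDimensional.span_of_finite F (by
      exact (Set.finite_singleton c).insert b)
    have hv' : LinearIndependent F (fun i => (⟨v i, hW i⟩ : W)) := by
      apply LinearIndependent.of_comp W.subtype
      exact hv
    have h3 : Fintype.card (Fin 3) ≤ finrank F W := hv'.fintype_card_le_finrank
    have h2 : finrank F W ≤ 2 := by
      classical
      have hle := finrank_span_le_card (R := F) ({b, c} : Set A)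
      refine hle.trans ?_
      have : ({b, c} : Set A).toFinset.card ≤ 2 := by
        rw [Set.toFinset_insert, Set.toFinset_singleton]
        exact (Finset.card_insert_le _ _).trans (by simp)
      exact this
    simp [Fintype.card_fin] at h3
    omega
end

section
/- Let F be a field of characteristic ≠ 2. Let R_a be the right multiplication operator by the basis element a of C₂ (which is invertible, with R_a² = id). The principal isotope C₂^{(R_a, R_a)}, with multiplication u ∗ v = (u·a)·(v·a), is isomorphic to J₂. In particular, the algebras C₂ and J₂ are isotopic. -/
open Module

/-- Over a field of characteristic `≠ 2`, the right multiplication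
operator `R_a` by the basis element `a` of `C₂` is invertible with `R_a² = id`, and
the principal isotope `C₂^{(R_a, R_a)}` (with multiplication `u ∗ v = (u·a)·(v·a)`)
is isomorphic to `J₂`. In particular, `C₂` and `J₂` are isotopic. -/
theorem stmt5 {F : Type*} [Field F] (hchar : (2 : F) ≠ 0)
    {A : Type*} [AddCommGroup A] [Module F A]
    (m : A →ₗ[F] A →ₗ[F] A) (a b c : A)
    (hbasis : LinearIndependent F ![a, b, c])
    (hspan : Submodule.span F {a, b, c} = ⊤)
    (haa : m a a = b) (hab : m a b = a) (hba : m b a = a)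
    (hac : m a c = c) (hca : m c a = c)
    (hbb : m b b = 0) (hcc : m c c = 0)
    (hbc : m b c = b) (hcb : m c b = b)
    {B : Type*} [AddCommGroup B] [Module F B]
    (m' : B →ₗ[F] B →ₗ[F] B) (e' x' y' : B)
    (hJ : IsCAlg F m' 1 0 0 e' x' y') :
    (∀ u : A, m (m u a) a = u) ∧
    Function.Bijective (fun u : A => m u a) ∧
    AlgIso F (fun u v : A => m (m u a) (m v a)) (fun u v : B => m' u v) ∧
    Isotopic F (fun u v : A => m u v) (fun u v : B => m' u v) := by
  obtain ⟨hJind, hJspan, hid1, hid2, hxx, hyy, hxy, hyx⟩ := hJ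
  simp only [AlgIso, Isotopic]
  have hxy' : m' x' y' = e' := by rw [hxy]; simp
  have hyx' : m' y' x' = e' := by rw [hyx]; simp
  have hrangeA : Set.range ![a, b, c] = {a, b, c} := by
    ext z; simp [Fin.exists_fin_succ]; tauto
  have hrangeB : Set.range ![e', x', y'] = {e', x', y'} := by
    ext z; simp [Fin.exists_fin_succ]; tauto
  let bA : Basis (Fin 3) F A := Basis.mk hbasis (by rw [hrangeA, hspan])
  let bB : Basis (Fin 3) F B := Basis.mk hJind (by rw [hrangeB, hJspan])
  have bA0 : bA 0 = a := by simp [bA]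
  have bA1 : bA 1 = b := by simp [bA]
  have bA2 : bA 2 = c := by simp [bA]
  have bB0 : bB 0 = e' := by simp [bB]
  have bB1 : bB 1 = x' := by simp [bB]
  have bB2 : bB 2 = y' := by simp [bB]
  set Ra : A →ₗ[F] A := m.flip a with hRa
  have hRaapp : ∀ u, Ra u = m u a := fun u => rfl
  have hinv : Ra.comp Ra = LinearMap.id := by
    apply bA.ext
    intro i
    fin_cases i <;>
      simp [bA0, bA1, bA2, hRaapp, haa, hab, hba, hca]
  have hinv' : ∀ u : A, m (m u a) a = u := by
    intro u
    have := LinearMap.congr_fun hinv u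
    simpa [hRaapp] using this
  have hRainv : Function.Involutive (fun u : A => m u a) := hinv'
  refine ⟨hinv', hRainv.bijective, ?_, ?_⟩
  · -- AlgIso
    refine ⟨bA.equiv bB (Equiv.swap 0 1), ?_⟩
    set φ := bA.equiv bB (Equiv.swap 0 1) with hφ
    have φa : φ a = x' := by rw [← bA0, hφ, Basis.equiv_apply]; simp [bB1]
    have φb : φ b = e' := by rw [← bA1, hφ, Basis.equiv_apply]; simp [bB0]
    have φc : φ c = y' := by rw [← bA2, hφ, Basis.equiv_apply, Equiv.swap_apply_of_ne_of_ne (by decide) (by decide), bB2]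
    have key : (((m.compl₁₂ Ra Ra).compr₂ (φ : A →ₗ[F] B)) : A →ₗ[F] A →ₗ[F] B)
        = m'.compl₁₂ (φ : A →ₗ[F] B) (φ : A →ₗ[F] B) := by
      apply bA.ext; intro i; apply bA.ext; intro j
      fin_cases i <;> fin_cases j <;>
        simp [bA0, bA1, bA2, hRaapp, haa, hab, hba, hac, hca, hbb, hcc, hbc, hcb,
          φa, φb, φc, hxx, hyy, hxy', hyx', hid1, hid2]
    intro u v
    have := LinearMap.congr_fun (LinearMap.congr_fun key u) v
    simpa [hRaapp] using this
  · -- Isotopic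
    set φ := bA.equiv bB (Equiv.swap 0 1) with hφ
    have φa : φ a = x' := by rw [← bA0, hφ, Basis.equiv_apply]; simp [bB1]
    have φb : φ b = e' := by rw [← bA1, hφ, Basis.equiv_apply]; simp [bB0]
    have φc : φ c = y' := by rw [← bA2, hφ, Basis.equiv_apply, Equiv.swap_apply_of_ne_of_ne (by decide) (by decide), bB2]
    have key : (((m.compl₁₂ Ra Ra).compr₂ (φ : A →ₗ[F] B)) : A →ₗ[F] A →ₗ[F] B)
        = m'.compl₁₂ (φ : A →ₗ[F] B) (φ : A →ₗ[F] B) := by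
      apply bA.ext; intro i; apply bA.ext; intro j
      fin_cases i <;> fin_cases j <;>
        simp [bA0, bA1, bA2, hRaapp, haa, hab, hba, hac, hca, hbb, hcc, hbc, hcb,
          φa, φb, φc, hxx, hyy, hxy', hyx', hid1, hid2]
    have hiso : ∀ u v : A, φ (m (m u a) (m v a)) = m' (φ u) (φ v) := by
      intro u v
      have := LinearMap.congr_fun (LinearMap.congr_fun key u) v
      simpa [hRaapp] using this
    let RaE : A ≃ₗ[F] A :=
      LinearEquiv.ofLinear Ra Ra hinv hinv
    refine ⟨RaE.trans φ, RaE.trans φ, φ, ?_⟩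
    intro u v
    simp only [LinearEquiv.trans_apply]
    have : φ (m (m (RaE u) a) (m (RaE v) a)) = m' (φ (RaE u)) (φ (RaE v)) := hiso _ _
    rw [← this]
    congr 1
    show m (m (m u a) a) (m (m v a) a) = m u v
    rw [hinv', hinv']
end

section
/- Let F be a field and α, β, γ ∈ F with αβγ ≠ 0. Then the algebra C(α,β,γ) is isomorphic to the algebra C(ρ), where ρ = α⁻¹βγ. -/
open Module

set_option maxHeartbeats 1000000 in
/-- If `αβγ ≠ 0`, then `C(α, β, γ)` is isomorphic to `C(ρ)` with
`ρ = α⁻¹βγ` (where `C(ρ) = C(ρ, ρ, ρ)`). -/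
theorem stmt8 {F : Type*} [Field F] (α β γ : F) (h : α * β * γ ≠ 0)
    {A : Type*} [AddCommGroup A] [Module F A]
    (m : A →ₗ[F] A →ₗ[F] A) (e x y : A)
    (hA : IsCAlg F m α β γ e x y)
    {B : Type*} [AddCommGroup B] [Module F B]
    (m' : B →ₗ[F] B →ₗ[F] B) (e' x' y' : B)
    (hB : IsCAlg F m' (α⁻¹ * β * γ) (α⁻¹ * β * γ) (α⁻¹ * β * γ) e' x' y') :
    AlgIso F (fun u v : A => m u v) (fun u v : B => m' u v) := by
  obtain ⟨hliA, hspA, heL, heR, hxx, hyy, hxy, hyx⟩ := hA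
  obtain ⟨hliB, hspB, heL', heR', hxx', hyy', hxy', hyx'⟩ := hB
  have hα : α ≠ 0 := fun h0 => h (by simp [h0])
  have hβ : β ≠ 0 := fun h0 => h (by simp [h0])
  have hγ : γ ≠ 0 := fun h0 => h (by simp [h0])
  have hrngA : Set.range ![e, x, y] = {e, x, y} := by
    ext z
    simp [Fin.exists_fin_succ, Set.mem_insert_iff, or_assoc]; tauto
  have hrngB : Set.range ![e', x', y'] = {e', x', y'} := by
    ext z
    simp [Fin.exists_fin_succ, Set.mem_insert_iff, or_assoc]; tauto
  let bA : Basis (Fin 3) F A := Basis.mk hliA (by rw [hrngA, hspA])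
  let bB : Basis (Fin 3) F B := Basis.mk hliB (by rw [hrngB, hspB])
  have bAcoe : ∀ i, bA i = ![e, x, y] i := fun i => by simp [bA]
  have bBcoe : ∀ i, bB i = ![e', x', y'] i := fun i => by simp [bB]
  let f : A →ₗ[F] B := bA.constr F ![e', (α * β⁻¹) • x', (α * γ⁻¹) • y']
  let g : B →ₗ[F] A := bB.constr F ![e, (α⁻¹ * β) • x, (α⁻¹ * γ) • y]
  have hf : ∀ i, f (bA i) = ![e', (α * β⁻¹) • x', (α * γ⁻¹) • y'] i := fun i =>
    Basis.constr_basis bA F _ i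
  have hg : ∀ i, g (bB i) = ![e, (α⁻¹ * β) • x, (α⁻¹ * γ) • y] i := fun i =>
    Basis.constr_basis bB F _ i
  have hfe : f e = e' := by rw [← show bA 0 = e from bAcoe 0, hf 0]; rfl
  have hfx : f x = (α * β⁻¹) • x' := by rw [← show bA 1 = x from bAcoe 1, hf 1]; rfl
  have hfy : f y = (α * γ⁻¹) • y' := by rw [← show bA 2 = y from bAcoe 2, hf 2]; rfl
  have hge : g e' = e := by rw [← show bB 0 = e' from bBcoe 0, hg 0]; rfl
  have hgx : g x' = (α⁻¹ * β) • x := by rw [← show bB 1 = x' from bBcoe 1, hg 1]; rfl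
  have hgy : g y' = (α⁻¹ * γ) • y := by rw [← show bB 2 = y' from bBcoe 2, hg 2]; rfl
  have hfg : f ∘ₗ g = LinearMap.id := by
    apply bB.ext
    intro i
    have hi := bBcoe i
    fin_cases i <;>
      simp only [Matrix.cons_val_zero, Matrix.cons_val_one, Matrix.head_cons,
        Matrix.cons_val_two, Matrix.tail_cons] at hi <;>
      rw [LinearMap.comp_apply, LinearMap.id_apply, hi] <;>
      simp [hge, hgx, hgy, hfe, hfx, hfy, smul_smul] <;>
      match_scalars <;> field_simp <;> tauto
  have hgf : g ∘ₗ f = LinearMap.id := by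
    apply bA.ext
    intro i
    have hi := bAcoe i
    fin_cases i <;>
      simp only [Matrix.cons_val_zero, Matrix.cons_val_one, Matrix.head_cons,
        Matrix.cons_val_two, Matrix.tail_cons] at hi <;>
      rw [LinearMap.comp_apply, LinearMap.id_apply, hi] <;>
      simp [hge, hgx, hgy, hfe, hfx, hfy, smul_smul] <;>
      match_scalars <;> field_simp <;> tauto
  let φ : A ≃ₗ[F] B := LinearEquiv.ofLinear f g hfg hgf
  refine ⟨φ, ?_⟩
  have key : ∀ i j, f (m (bA i) (bA j)) = m' (f (bA i)) (f (bA j)) := by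
    intro i j
    have hi := bAcoe i
    have hj := bAcoe j
    fin_cases i <;> fin_cases j <;>
      simp only [Matrix.cons_val_zero, Matrix.cons_val_one, Matrix.head_cons,
        Matrix.cons_val_two, Matrix.tail_cons] at hi hj <;>
      simp only [hi, hj] <;>
      simp [heL, heR, hxx, hyy, hxy, hyx,
        hfe, hfx, hfy, heL', heR', hxx', hyy', hxy', hyx',
        smul_add, smul_smul] <;>
      match_scalars <;> field_simp <;> (first | exact Or.inl (by ring) | ring)
  have main : (m.compr₂ f) = (LinearMap.compl₁₂ m' f f) := by
    apply bA.ext; intro i; apply bA.ext; intro j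
    simpa using key i j
  intro u v
  have := LinearMap.congr_fun (LinearMap.congr_fun main u) v
  simp at this; exact this
end

section
/- Let F be a field and α, β ∈ F with αβ ≠ 0. Then the algebra C(α,β,0) is isomorphic to the algebra C(1,1,0). -/
open Module

/-- If `αβ ≠ 0`, then `C(α, β, 0)` is isomorphic to `C(1, 1, 0)`. -/
theorem stmt9 {F : Type*} [Field F] (α β : F) (h : α * β ≠ 0)
    {A : Type*} [AddCommGroup A] [Module F A]
    (m : A →ₗ[F] A →ₗ[F] A) (e x y : A)
    (hA : IsCAlg F m α β 0 e x y)
    {B : Type*} [AddCommGroup B] [Module F B]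
    (m' : B →ₗ[F] B →ₗ[F] B) (e' x' y' : B)
    (hB : IsCAlg F m' 1 1 0 e' x' y') :
    AlgIso F (fun u v : A => m u v) (fun u v : B => m' u v) := by
  obtain ⟨liA, spA, heA, heA', hxxA, hyyA, hxyA, hyxA⟩ := hA
  obtain ⟨liB, spB, heB, heB', hxxB, hyyB, hxyB, hyxB⟩ := hB
  have hα : α ≠ 0 := left_ne_zero_of_mul h
  have hβ : β ≠ 0 := right_ne_zero_of_mul h
  have spA' : ⊤ ≤ Submodule.span F (Set.range ![e, x, y]) := by
    rw [show Set.range ![e, x, y] = {e, x, y} by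
      simp only [Matrix.range_cons, Matrix.range_empty, Set.union_empty,
        Set.union_insert, Set.union_singleton]
      ext z; simp; tauto]
    exact spA.ge
  have spB' : ⊤ ≤ Submodule.span F (Set.range ![e', x', y']) := by
    rw [show Set.range ![e', x', y'] = {e', x', y'} by
      simp only [Matrix.range_cons, Matrix.range_empty, Set.union_empty,
        Set.union_insert, Set.union_singleton]
      ext z; simp; tauto]
    exact spB.ge
  let bA : Basis (Fin 3) F A := Basis.mk liA spA'
  let bB : Basis (Fin 3) F B := Basis.mk liB spB'
  let w : Fin 3 → Fˣ := ![1, Units.mk0 (α / β) (div_ne_zero hα hβ), Units.mk0 β hβ]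
  let bB2 : Basis (Fin 3) F B := bB.unitsSMul w
  let φ : A ≃ₗ[F] B := bA.equiv bB2 (Equiv.refl _)
  have hbA : ∀ i, bA i = ![e, x, y] i := fun i => by simp [bA]
  have hbB : ∀ i, bB i = ![e', x', y'] i := fun i => by simp [bB]
  have hφ : ∀ i, φ (![e, x, y] i) = (w i : F) • ![e', x', y'] i := fun i => by
    rw [← hbA i, ← hbB i]
    simp [φ, bB2, Basis.unitsSMul_apply, Units.smul_def]
  have hφe : φ e = e' := by have := hφ 0; simpa [w] using this
  have hφx : φ x = (α / β) • x' := by have := hφ 1; simpa [w] using this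
  have hφy : φ y = β • y' := by have := hφ 2; simpa [w] using this
  have key : (LinearMap.compr₂ m φ.toLinearMap)
      = (m'.compl₁₂ φ.toLinearMap φ.toLinearMap) := by
    apply bA.ext; intro i
    apply bA.ext; intro j
    rw [hbA i, hbA j]
    have h1 : β * (α / β) = α := by field_simp
    have h2 : α / β * β = α := by field_simp
    fin_cases i <;> fin_cases j <;>
      simp [heA, heA', hxxA, hyyA, hxyA, hyxA, hφe, hφx, hφy,
        heB, heB', hxxB, hyyB, hxyB, hyxB, smul_smul, smul_add, h1, h2]
  exact ⟨φ, fun u v => LinearMap.congr_fun (LinearMap.congr_fun key u) v⟩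
end

section
/- Let F be a field of characteristic ≠ 2 and α ∈ F. If α ≠ 0 and α ≠ −2, then the nil-rank of the algebra C(α) equals 2. The nil-rank of the algebra C(−2) equals 3, i.e. C(−2) has a basis consisting of nil-elements of index 2. -/
open Module

open Module

section
variable {F : Type*} [Field F] {A : Type} [AddCommGroup A] [Module F A]

lemma calg_sq (m : A →ₗ[F] A →ₗ[F] A) {α : F} {e x y : A}
    (he : ∀ u, m e u = u) (he' : ∀ u, m u e = u) (hx2 : m x x = 0) (hy2 : m y y = 0)
    (hxy : m x y = α • e + α • x + α • y) (hyx : m y x = α • e + α • x + α • y)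
    (a b c : F) :
    m (a•e+b•x+c•y) (a•e+b•x+c•y)
      = (a*a+2*α*b*c)•e + (2*a*b+2*α*b*c)•x + (2*a*c+2*α*b*c)•y := by
  simp only [map_add, map_smul, LinearMap.add_apply, LinearMap.smul_apply,
    he, he', hx2, hy2, hxy, hyx, smul_add, smul_smul, smul_zero]
  module

lemma calg_coeff {e x y : A} (hli : LinearIndependent F ![e, x, y]) {p q r : F}
    (h : p•e + q•x + r•y = 0) : p = 0 ∧ q = 0 ∧ r = 0 := by
  have := Fintype.linearIndependent_iff.mp hli ![p, q, r]
    (by simpa [Fin.sum_univ_three] using h)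
  exact ⟨this 0, this 1, this 2⟩

lemma calg_repr {e x y : A} (hspan : Submodule.span F ({e, x, y} : Set A) = ⊤) (u : A) :
    ∃ a b c : F, u = a•e + b•x + c•y := by
  have hr : ({e, x, y} : Set A) = Set.range ![e, x, y] := by
    ext z; simp [Fin.exists_fin_succ, Fin.exists_fin_two, eq_comm, or_comm, or_left_comm]
  rw [hr] at hspan
  obtain ⟨cf, hcf⟩ := (Submodule.mem_span_range_iff_exists_fun F).mp
    (hspan ▸ Submodule.mem_top : u ∈ Submodule.span F (Set.range ![e,x,y]))
  exact ⟨cf 0, cf 1, cf 2, by rw [← hcf]; simp [Fin.sum_univ_three]⟩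

-- x, y are linearly independent
lemma calg_li_xy {e x y : A} (hli : LinearIndependent F ![e, x, y]) :
    LinearIndependent F ![x, y] := by
  have h : ![x, y] = ![e, x, y] ∘ ![1, 2] := by
    ext i; fin_cases i <;> rfl
  rw [h]
  exact hli.comp _ (by decide)

-- nil elements lie in span {x, y} when α ≠ -2
lemma calg_nil_mem (hchar : (2 : F) ≠ 0) {α : F} (hα2 : α ≠ -2)
    (m : A →ₗ[F] A →ₗ[F] A) {e x y : A} (h : IsCAlg F m α α α e x y)
    (u : A) (hu : m u u = 0) : u ∈ Submodule.span F ({x, y} : Set A) := by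
  obtain ⟨hli, hspan, he, he', hx2, hy2, hxy, hyx⟩ := h
  obtain ⟨a, b, c, rfl⟩ := calg_repr hspan u
  rw [calg_sq m he he' hx2 hy2 hxy hyx] at hu
  obtain ⟨e1, e2, e3⟩ := calg_coeff hli hu
  have ha : a = 0 := by
    by_contra ha
    have hbc : b = c := by
      have h23 : (2 * a) * b = (2 * a) * c := by
        linear_combination e2 - e3
      exact mul_left_cancel₀ (mul_ne_zero hchar ha) h23
    subst hbc
    have hab : a = 2 * b := by
      have h12 : a * (a - 2*b) = 0 := by linear_combination e1 - e2
      rcases mul_eq_zero.mp h12 with h | h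
      · exact absurd h ha
      · linear_combination h
    have hb : b = 0 := by
      have : (2 * (α + 2)) * (b * b) = 0 := by linear_combination e2 - 2*b*hab
      rcases mul_eq_zero.mp this with h | h
      · exact absurd h (mul_ne_zero hchar fun h' => hα2 (by linear_combination h'))
      · rcases mul_eq_zero.mp h with h | h <;> exact h
    exact ha (by rw [hab, hb, mul_zero])
  rw [ha, zero_smul, zero_add]
  exact Submodule.add_mem _
    (Submodule.smul_mem _ _ (Submodule.subset_span (by simp)))
    (Submodule.smul_mem _ _ (Submodule.subset_span (by simp)))

end

/-- Over a field of characteristic `≠ 2`: if `α ≠ 0` and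
`α ≠ -2`, then the nil-rank of `C(α) = C(α, α, α)` equals `2`; the nil-rank of
`C(-2)` equals `3`, i.e. `C(-2)` has a basis of nil-elements of index 2. -/
theorem stmt11 {F : Type*} [Field F] (hchar : (2 : F) ≠ 0) :
    (∀ α : F, α ≠ 0 → α ≠ -2 →
      ∀ (A : Type) [AddCommGroup A] [Module F A],
      ∀ (m : A →ₗ[F] A →ₗ[F] A) (e x y : A), IsCAlg F m α α α e x y →
        HasNilRank F (fun u v : A => m u v) 2) ∧
    (∀ (A : Type) [AddCommGroup A] [Module F A],
      ∀ (m : A →ₗ[F] A →ₗ[F] A) (e x y : A), IsCAlg F m (-2) (-2) (-2) e x y →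
        HasNilRank F (fun u v : A => m u v) 3 ∧
        ∃ v : Fin 3 → A, LinearIndependent F v ∧
          Submodule.span F (Set.range v) = ⊤ ∧ ∀ i, m (v i) (v i) = 0) := by
  constructor
  · intro α hα0 hα2 A _ _ m e x y h
    obtain ⟨hli, hspan, he, he', hx2, hy2, hxy, hyx⟩ := id h
    constructor
    · refine ⟨![x, y], calg_li_xy hli, ?_⟩
      intro i; fin_cases i
      · exact hx2
      · exact hy2
    · intro v hv
      by_contra hc
      push_neg at hc
      have hmem : ∀ i, v i ∈ Submodule.span F ({x, y} : Set A) :=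
        fun i => calg_nil_mem hchar hα2 m h (v i) (hc i)
      set W := Submodule.span F ({x, y} : Set A) with hW
      let w : Fin 3 → W := fun i => ⟨v i, hmem i⟩
      have hw : LinearIndependent F w := by
        apply LinearIndependent.of_comp W.subtype
        exact hv
      haveI : Module.Finite F W := FiniteDimensional.span_of_finite F (Set.toFinite _)
      have h3 : 3 ≤ finrank F W := by simpa using hw.fintype_card_le_finrank
      have h2 : finrank F W ≤ 2 := by
        have hthis := finrank_range_le_card (R := F) ![x, y]
        have hr : ({x, y} : Set A) = Set.range ![x, y] := by
          ext u; simp [Fin.exists_fin_two, eq_comm, or_comm]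
        rw [hW, hr]
        simpa [Set.finrank] using hthis
      omega
  · intro A _ _ m e x y h
    obtain ⟨hli, hspan, he, he', hx2, hy2, hxy, hyx⟩ := id h
    set z := (2 : F) • e + (1 : F) • x + (1 : F) • y with hz
    have hz2 : m z z = 0 := by
      rw [hz, calg_sq m he he' hx2 hy2 hxy hyx]
      norm_num
    set v := ![z, x, y] with hv
    have hvli : LinearIndependent F v := by
      rw [Fintype.linearIndependent_iff]
      intro g hg
      have hg' : (2 * g 0) • e + (g 0 + g 1) • x + (g 0 + g 2) • y = 0 := by
        rw [← hg]
        simp only [hv, Fin.sum_univ_three, Matrix.cons_val_zero, Matrix.cons_val_one,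
          Matrix.head_cons, Matrix.cons_val_two, Matrix.tail_cons, hz]
        module
      obtain ⟨p1, p2, p3⟩ := calg_coeff hli hg'
      have h0 : g 0 = 0 := (mul_eq_zero.mp p1).resolve_left hchar
      have h1 : g 1 = 0 := by linear_combination p2 - h0
      have h2 : g 2 = 0 := by linear_combination p3 - h0
      intro i; fin_cases i
      · exact h0
      · exact h1
      · exact h2
    have hzm : z ∈ Submodule.span F (Set.range v) := Submodule.subset_span ⟨0, rfl⟩
    have hxm : x ∈ Submodule.span F (Set.range v) := Submodule.subset_span ⟨1, rfl⟩
    have hym : y ∈ Submodule.span F (Set.range v) := Submodule.subset_span ⟨2, rfl⟩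
    have hem : e ∈ Submodule.span F (Set.range v) := by
      have hze : z - (1 : F) • x - (1 : F) • y = (2 : F) • e := by rw [hz]; abel
      have hee : (2 : F)⁻¹ • (z - (1 : F) • x - (1 : F) • y) = e := by
        rw [hze, smul_smul, inv_mul_cancel₀ hchar, one_smul]
      rw [← hee]
      exact Submodule.smul_mem _ _ (Submodule.sub_mem _
        (Submodule.sub_mem _ hzm (Submodule.smul_mem _ _ hxm)) (Submodule.smul_mem _ _ hym))
    have hvspan : Submodule.span F (Set.range v) = ⊤ := by
      rw [eq_top_iff, ← hspan, Submodule.span_le]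
      intro u hu
      rcases hu with rfl | rfl | rfl
      · exact hem
      · exact hxm
      · exact hym
    have hnil : ∀ i, m (v i) (v i) = 0 := by
      intro i; fin_cases i
      · exact hz2
      · exact hx2
      · exact hy2
    refine ⟨⟨⟨v, hvli, hnil⟩, ?_⟩, v, hvli, hvspan, hnil⟩
    intro w hw
    exfalso
    haveI : Module.Finite F A := ⟨Submodule.fg_def.mpr ⟨{e, x, y}, Set.toFinite _, hspan⟩⟩
    have h4 : 4 ≤ finrank F A := by simpa using hw.fintype_card_le_finrank
    have h3 : finrank F A ≤ 3 := by
      have hthis := finrank_range_le_card (R := F) ![e, x, y]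
      have hr : ({e, x, y} : Set A) = Set.range ![e, x, y] := by
        ext u
        simp [Fin.exists_fin_succ, Fin.exists_fin_two, eq_comm, or_comm, or_left_comm]
      have hsp2 : Submodule.span F (Set.range ![e, x, y]) = ⊤ := by rw [← hr]; exact hspan
      calc finrank F A = finrank F (⊤ : Submodule F A) := (finrank_top F A).symm
        _ ≤ 3 := by rw [← hsp2]; simpa [Set.finrank] using hthis
    omega
end

section
/- Let F be a field of characteristic ≠ 2. The algebras C(1,1,0) and C(1,0,0) = J₂ are isotopic but not isomorphic. (Non-isomorphism holds because J₂ is a Jordan algebra while in C(1,1,0) the associator identity (u²,v,u) = 0 fails: (xy, x, y) = −x ≠ 0.) -/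
open Module

/-- Over a field of characteristic `≠ 2`, the algebras
`C(1, 1, 0)` and `C(1, 0, 0) = J₂` are isotopic but not isomorphic. -/
theorem stmt13 {F : Type*} [Field F] (hchar : (2 : F) ≠ 0)
    {A : Type*} [AddCommGroup A] [Module F A]
    (m : A →ₗ[F] A →ₗ[F] A) (e x y : A)
    (hA : IsCAlg F m 1 1 0 e x y)
    {B : Type*} [AddCommGroup B] [Module F B]
    (m' : B →ₗ[F] B →ₗ[F] B) (e' x' y' : B)
    (hB : IsCAlg F m' 1 0 0 e' x' y') :
    Isotopic F (fun u v : A => m u v) (fun u v : B => m' u v) ∧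
    ¬ AlgIso F (fun u v : A => m u v) (fun u v : B => m' u v) := by
  obtain ⟨liA, spA, leA, reA, xxA, yyA, xyA, yxA⟩ := hA
  obtain ⟨liB, spB, leB, reB, xxB, yyB, xyB, yxB⟩ := hB
  rw [show (1:F) • e + (1:F) • x + (0:F) • y = e + x by module] at xyA yxA
  rw [show (1:F) • e' + (0:F) • x' + (0:F) • y' = e' by module] at xyB yxB
  -- bases
  have hrangeA : Set.range ![e,x,y] = {e,x,y} := by
    ext z; simp [Matrix.range_cons, Matrix.range_empty]; tauto
  have hrangeB : Set.range ![e',x',y'] = {e',x',y'} := by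
    ext z; simp [Matrix.range_cons, Matrix.range_empty]; tauto
  let bA : Basis (Fin 3) F A := Basis.mk liA (by rw [hrangeA, spA])
  let bB : Basis (Fin 3) F B := Basis.mk liB (by rw [hrangeB, spB])
  have hbA : bA 0 = e ∧ bA 1 = x ∧ bA 2 = y := by
    refine ⟨?_, ?_, ?_⟩ <;> simp [bA, Basis.mk_apply]
  have hbB : bB 0 = e' ∧ bB 1 = x' ∧ bB 2 = y' := by
    refine ⟨?_, ?_, ?_⟩ <;> simp [bB, Basis.mk_apply]
  have coordsA : ∀ u : A, ∃ a b c : F, u = a • e + b • x + c • y := by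
    intro u
    refine ⟨bA.repr u 0, bA.repr u 1, bA.repr u 2, ?_⟩
    have h := bA.sum_repr u
    rw [Fin.sum_univ_three] at h
    simp only [bA, Basis.coe_mk] at h
    simpa [bA] using h.symm
  have coordsB : ∀ u : B, ∃ a b c : F, u = a • e' + b • x' + c • y' := by
    intro u
    refine ⟨bB.repr u 0, bB.repr u 1, bB.repr u 2, ?_⟩
    have h := bB.sum_repr u
    rw [Fin.sum_univ_three] at h
    simp only [bB, Basis.coe_mk] at h
    simpa [bB] using h.symm
  have hcoef : ∀ p q r : F, p • e' + q • x' + r • y' = 0 → p = 0 ∧ q = 0 ∧ r = 0 := by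
    intro p q r h
    have hli := Fintype.linearIndependent_iff.mp liB ![p,q,r] (by
      rw [Fin.sum_univ_three]; simpa using h)
    exact ⟨hli 0, hli 1, hli 2⟩
  -- the isotopy
  let φL : A →ₗ[F] B := bA.constr F ![e' - (2⁻¹:F) • x', x', y']
  let φI : B →ₗ[F] A := bB.constr F ![e + (2⁻¹:F) • x, x, y]
  let ξL : A →ₗ[F] B := bA.constr F ![e' - x', x', y' - (2⁻¹:F) • e']
  let ξI : B →ₗ[F] A := bB.constr F ![e + x, x, (2⁻¹:F) • e + (2⁻¹:F) • x + y]
  have hφe : φL e = e' - (2⁻¹:F) • x' := by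
    rw [← hbA.1]; simp [φL, Basis.constr_basis]
  have hφx : φL x = x' := by rw [← hbA.2.1]; simp [φL, Basis.constr_basis]
  have hφy : φL y = y' := by rw [← hbA.2.2]; simp [φL, Basis.constr_basis]
  have hIe : φI e' = e + (2⁻¹:F) • x := by rw [← hbB.1]; simp [φI, Basis.constr_basis]
  have hIx : φI x' = x := by rw [← hbB.2.1]; simp [φI, Basis.constr_basis]
  have hIy : φI y' = y := by rw [← hbB.2.2]; simp [φI, Basis.constr_basis]
  have hξe : ξL e = e' - x' := by rw [← hbA.1]; simp [ξL, Basis.constr_basis]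
  have hξx : ξL x = x' := by rw [← hbA.2.1]; simp [ξL, Basis.constr_basis]
  have hξy : ξL y = y' - (2⁻¹:F) • e' := by rw [← hbA.2.2]; simp [ξL, Basis.constr_basis]
  have hJe : ξI e' = e + x := by rw [← hbB.1]; simp [ξI, Basis.constr_basis]
  have hJx : ξI x' = x := by rw [← hbB.2.1]; simp [ξI, Basis.constr_basis]
  have hJy : ξI y' = (2⁻¹:F) • e + (2⁻¹:F) • x + y := by
    rw [← hbB.2.2]; simp [ξI, Basis.constr_basis]
  let φ : A ≃ₗ[F] B := LinearEquiv.ofLinear φL φI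
    (by refine bB.ext fun i => ?_; fin_cases i <;>
          simp [hbB.1, hbB.2.1, hbB.2.2, hIe, hIx, hIy, hφe, hφx, hφy, map_add, map_smul] <;> module)
    (by refine bA.ext fun i => ?_; fin_cases i <;>
          simp [hbA.1, hbA.2.1, hbA.2.2, hIe, hIx, hIy, hφe, hφx, hφy, map_add, map_smul, map_sub] <;> module)
  let ξ : A ≃ₗ[F] B := LinearEquiv.ofLinear ξL ξI
    (by refine bB.ext fun i => ?_; fin_cases i <;>
          simp [hbB.1, hbB.2.1, hbB.2.2, hJe, hJx, hJy, hξe, hξx, hξy, map_add, map_smul, map_sub] <;> module)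
    (by refine bA.ext fun i => ?_; fin_cases i <;>
          simp [hbA.1, hbA.2.1, hbA.2.2, hJe, hJx, hJy, hξe, hξx, hξy, map_add, map_smul, map_sub] <;> module)
  have h2 : (2:F)⁻¹ * 2 = 1 := inv_mul_cancel₀ hchar
  have hiso : ∀ u v : A, m' (φ u) (φ v) = ξ (m u v) := by
    intro u v
    obtain ⟨a, b, c, rfl⟩ := coordsA u
    obtain ⟨d, f, g, rfl⟩ := coordsA v
    simp only [φ, ξ, LinearEquiv.ofLinear_apply]
    simp only [map_add, map_smul, LinearMap.add_apply, LinearMap.smul_apply,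
      hφe, hφx, hφy, hξe, hξx, hξy, map_sub, LinearMap.sub_apply,
      leA, reA, xxA, yyA, xyA, yxA, leB, reB, xxB, yyB, xyB, yxB, map_zero, smul_zero]
    match_scalars <;>
      first
        | linear_combination (-(d*a)) * h2
        | ring
  constructor
  · exact ⟨φ, φ, ξ, fun u v => hiso u v⟩
  -- non-isomorphism
  rintro ⟨ψ, hψ⟩
  simp only at hψ
  have hψe : ψ e = e' := by
    have h1 : ∀ w : B, m' (ψ e) w = w := by
      intro w
      have h := hψ e (ψ.symm w)
      rw [leA, LinearEquiv.apply_symm_apply] at h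
      exact h.symm
    have h2' := h1 e'
    rwa [reB] at h2'
  -- square-zero elements have zero e'-coordinate
  have hsq : ∀ a b c : F,
      m' (a • e' + b • x' + c • y') (a • e' + b • x' + c • y') = 0 → a = 0 := by
    intro a b c h
    have hexp : (a*a + 2*(b*c)) • e' + (2*(a*b)) • x' + (2*(a*c)) • y' = 0 := by
      rw [← h]
      simp only [map_add, map_smul, LinearMap.add_apply, LinearMap.smul_apply,
        leB, reB, xxB, yyB, xyB, yxB, smul_zero, map_zero]
      match_scalars <;> ring
    obtain ⟨h1, hq, hr⟩ := hcoef _ _ _ hexp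
    have hab : a * b = 0 := by
      rcases mul_eq_zero.mp hq with h' | h'
      · exact absurd h' hchar
      · exact h'
    have hac : a * c = 0 := by
      rcases mul_eq_zero.mp hr with h' | h'
      · exact absurd h' hchar
      · exact h'
    by_contra ha
    have hb : b = 0 := by
      rcases mul_eq_zero.mp hab with h' | h'
      · exact absurd h' ha
      · exact h'
    have hc : c = 0 := by
      rcases mul_eq_zero.mp hac with h' | h'
      · exact absurd h' ha
      · exact h'
    rw [hb, hc] at h1
    apply ha
    have haa : a * a = 0 := by simpa using h1
    exact mul_self_eq_zero.mp haa
  obtain ⟨a, b, c, hx1⟩ := coordsB (ψ x)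
  obtain ⟨a2, b2, c2, hy1⟩ := coordsB (ψ y)
  have hxx0 : m' (ψ x) (ψ x) = 0 := by
    have h := hψ x x
    rw [xxA, map_zero] at h
    exact h.symm
  have hyy0 : m' (ψ y) (ψ y) = 0 := by
    have h := hψ y y
    rw [yyA, map_zero] at h
    exact h.symm
  have ha : a = 0 := hsq a b c (by rw [← hx1]; exact hxx0)
  have ha2 : a2 = 0 := hsq a2 b2 c2 (by rw [← hy1]; exact hyy0)
  rw [ha, zero_smul, zero_add] at hx1
  rw [ha2, zero_smul, zero_add] at hy1
  have hxy' : m' (ψ x) (ψ y) = e' + ψ x := by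
    have h := hψ x y
    rw [xyA, map_add, hψe] at h
    exact h.symm
  have hzero : m' (b • x' + c • y') (b2 • x' + c2 • y') - (e' + (b • x' + c • y')) = 0 := by
    rw [← hx1, ← hy1, hxy', sub_self]
  have hfin : (b*c2 + c*b2 - 1) • e' + (-b) • x' + (-c) • y' = 0 := by
    rw [← hzero]
    simp only [map_add, map_smul, LinearMap.add_apply, LinearMap.smul_apply,
      leB, reB, xxB, yyB, xyB, yxB, smul_zero, map_zero]
    match_scalars <;> ring
  obtain ⟨h1, hq, hr⟩ := hcoef _ _ _ hfin
  rw [neg_eq_zero] at hq hr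
  rw [hq, hr] at h1
  simp at h1
end

section
/- Let F be a field of characteristic ≠ 2 and ρ ∈ F with ρ ≠ 0 and ρ ≠ −2. Then the algebras C(ρ) and J₂ are isotopic. -/
open Module

set_option maxHeartbeats 2000000 in
/-- Over a field of characteristic `≠ 2`, for `ρ ≠ 0`, `ρ ≠ -2`,
the algebras `C(ρ) = C(ρ, ρ, ρ)` and `J₂ = C(1, 0, 0)` are isotopic. -/
theorem stmt14 {F : Type*} [Field F] (hchar : (2 : F) ≠ 0)
    (ρ : F) (hρ0 : ρ ≠ 0) (hρ2 : ρ ≠ -2)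
    {A : Type*} [AddCommGroup A] [Module F A]
    (m : A →ₗ[F] A →ₗ[F] A) (e x y : A)
    (hA : IsCAlg F m ρ ρ ρ e x y)
    {B : Type*} [AddCommGroup B] [Module F B]
    (m' : B →ₗ[F] B →ₗ[F] B) (e' x' y' : B)
    (hB : IsCAlg F m' 1 0 0 e' x' y') :
    Isotopic F (fun u v : A => m u v) (fun u v : B => m' u v) := by
  
  obtain ⟨hAli, hAsp, hAl, hAr, hAxx, hAyy, hAxy, hAyx⟩ := hA
  obtain ⟨hBli, hBsp, hBl, hBr, hBxx, hByy, hBxy, hByx⟩ := hB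
  have h2 : ρ + 2 ≠ 0 := fun h => hρ2 (by linear_combination h)
  have h4 : (4 : F) ≠ 0 := by
    intro h; exact hchar (by have := mul_self_eq_zero.mp (by linear_combination h : (2:F)*2 = 0); exact this)
  -- bases
  have hAsp' : ⊤ ≤ Submodule.span F (Set.range ![e, x, y]) := by
    rw [show Set.range ![e, x, y] = {e, x, y} by
      ext u; simp [Fin.exists_fin_succ]; tauto]
    exact hAsp.ge
  have hBsp' : ⊤ ≤ Submodule.span F (Set.range ![e', x', y']) := by
    rw [show Set.range ![e', x', y'] = {e', x', y'} by
      ext u; simp [Fin.exists_fin_succ]; tauto]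
    exact hBsp.ge
  set bA : Basis (Fin 3) F A := Basis.mk hAli hAsp' with hbA
  set bB : Basis (Fin 3) F B := Basis.mk hBli hBsp' with hbB
  have bA0 : bA 0 = e := by simp [hbA]
  have bA1 : bA 1 = x := by simp [hbA]
  have bA2 : bA 2 = y := by simp [hbA]
  have bB0 : bB 0 = e' := by simp [hbB]
  have bB1 : bB 1 = x' := by simp [hbB]
  have bB2 : bB 2 = y' := by simp [hbB]
  set r : F := -ρ / (ρ + 2) with hr
  set μ : F := 2 * ρ / (ρ + 2) with hmu
  -- forward map f (for φ = ψ) and its inverse g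
  set f : A →ₗ[F] B := bA.constr F ![e' - (2:F)⁻¹ • x' + r • y', x', μ • y'] with hf
  set g : B →ₗ[F] A := bB.constr F
    ![e + (2:F)⁻¹ • x + (2:F)⁻¹ • y, x, ((ρ + 2) / (2 * ρ)) • y] with hg
  have fe : f e = e' - (2:F)⁻¹ • x' + r • y' := by
    rw [← bA0, hf, Basis.constr_basis]; rfl
  have fx : f x = x' := by rw [← bA1, hf, Basis.constr_basis]; rfl
  have fy : f y = μ • y' := by rw [← bA2, hf, Basis.constr_basis]; rfl
  have ge : g e' = e + (2:F)⁻¹ • x + (2:F)⁻¹ • y := by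
    rw [← bB0, hg, Basis.constr_basis]; rfl
  have gx : g x' = x := by rw [← bB1, hg, Basis.constr_basis]; rfl
  have gy : g y' = ((ρ + 2) / (2 * ρ)) • y := by
    rw [← bB2, hg, Basis.constr_basis]; rfl
  -- forward map u (for ξ) and its inverse w
  set u : A →ₗ[F] B := bA.constr F
    ![(1 - r) • e' - x' + (2 * r) • y', r • e' + x', (-(μ / 2)) • e' + μ • y'] with hu
  set w : B →ₗ[F] A := bB.constr F
    ![((ρ + 2) / 2) • e + ((ρ + 2) / 2) • x + ((ρ + 2) / 2) • y,
      (ρ / 2) • e + (ρ / 2 + 1) • x + (ρ / 2) • y,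
      ((ρ + 2) / 4) • e + ((ρ + 2) / 4) • x + ((ρ + 2) ^ 2 / (4 * ρ)) • y] with hw
  have ue : u e = (1 - r) • e' - x' + (2 * r) • y' := by
    rw [← bA0, hu, Basis.constr_basis]; rfl
  have ux : u x = r • e' + x' := by rw [← bA1, hu, Basis.constr_basis]; rfl
  have uy : u y = (-(μ / 2)) • e' + μ • y' := by rw [← bA2, hu, Basis.constr_basis]; rfl
  have we : w e' = ((ρ + 2) / 2) • e + ((ρ + 2) / 2) • x + ((ρ + 2) / 2) • y := by
    rw [← bB0, hw, Basis.constr_basis]; rfl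
  have wx : w x' = (ρ / 2) • e + (ρ / 2 + 1) • x + (ρ / 2) • y := by
    rw [← bB1, hw, Basis.constr_basis]; rfl
  have wy : w y' = ((ρ + 2) / 4) • e + ((ρ + 2) / 4) • x + ((ρ + 2) ^ 2 / (4 * ρ)) • y := by
    rw [← bB2, hw, Basis.constr_basis]; rfl
  have hfg : f.comp g = LinearMap.id := by
    apply bB.ext; intro i
    fin_cases i <;>
      simp only [Fin.zero_eta, Fin.mk_one, Fin.reduceFinMk, LinearMap.comp_apply,
        LinearMap.id_apply, bB0, bB1, bB2,
        ge, gx, gy, map_add, map_sub, map_smul, fe, fx, fy, hr, hmu] <;>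
      match_scalars <;> (field_simp [h2, hρ0, hchar, h4]; try ring)
  have hgf : g.comp f = LinearMap.id := by
    apply bA.ext; intro i
    fin_cases i <;>
      simp only [Fin.zero_eta, Fin.mk_one, Fin.reduceFinMk, LinearMap.comp_apply,
        LinearMap.id_apply, bA0, bA1, bA2,
        fe, fx, fy, map_add, map_sub, map_smul, ge, gx, gy, hr, hmu] <;>
      match_scalars <;> (field_simp [h2, hρ0, hchar, h4]; try ring)
  have huw : u.comp w = LinearMap.id := by
    apply bB.ext; intro i
    fin_cases i <;>
      simp only [Fin.zero_eta, Fin.mk_one, Fin.reduceFinMk, LinearMap.comp_apply,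
        LinearMap.id_apply, bB0, bB1, bB2,
        we, wx, wy, map_add, map_sub, map_smul, ue, ux, uy, hr, hmu] <;>
      match_scalars <;> (field_simp [h2, hρ0, hchar, h4]; try ring)
  have hwu : w.comp u = LinearMap.id := by
    apply bA.ext; intro i
    fin_cases i <;>
      simp only [Fin.zero_eta, Fin.mk_one, Fin.reduceFinMk, LinearMap.comp_apply,
        LinearMap.id_apply, bA0, bA1, bA2,
        ue, ux, uy, map_add, map_sub, map_smul, we, wx, wy, hr, hmu] <;>
      match_scalars <;> (field_simp [h2, hρ0, hchar, h4]; try ring)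
  have key : m'.compl₁₂ f f = m.compr₂ u := by
    apply bA.ext; intro i
    refine bA.ext fun j => ?_
    fin_cases i <;> fin_cases j <;>
      simp only [Fin.zero_eta, Fin.mk_one, Fin.reduceFinMk, bA0, bA1, bA2,
        LinearMap.compl₁₂_apply, LinearMap.compr₂_apply,
        hAl, hAr, hAxx, hAyy, hAxy, hAyx, fe, fx, fy,
        map_add, map_sub, map_smul, map_zero,
        LinearMap.add_apply, LinearMap.sub_apply, LinearMap.smul_apply, LinearMap.zero_apply,
        hBl, hBr, hBxx, hByy, hBxy, hByx, ue, ux, uy,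
        smul_add, smul_sub, smul_smul, smul_zero, hr, hmu] <;>
      match_scalars <;> (field_simp [h2, hρ0, hchar, h4]; try ring)
  refine ⟨.ofLinear f g hfg hgf, .ofLinear f g hfg hgf, .ofLinear u w huw hwu, fun a b => ?_⟩
  have h := DFunLike.congr_fun (DFunLike.congr_fun key a) b
  simpa [LinearMap.compl₁₂_apply, LinearMap.compr₂_apply] using h
end

section
/- Let F be an algebraically closed field of characteristic ≠ 2. Every simple unital commutative 3-dimensional algebra over F of nil-rank 2 is isotopic to the Jordan algebra J₂ of a nondegenerate symmetric bilinear form on a 2-dimensional vector space. -/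
open Module

-- ===== auxiliary lemmas =====

private lemma comp_id_comm {F : Type*} [Field F] {B : Type*} [AddCommGroup B] [Module F B]
    [FiniteDimensional F B] {f g : B →ₗ[F] B} (h : f.comp g = LinearMap.id) :
    g.comp f = LinearMap.id := by
  have : f * g = 1 := h
  have := mul_eq_one_comm.mp this
  exact this

set_option maxHeartbeats 2000000 in
/-- Over an algebraically closed field of characteristic `≠ 2`,
every simple unital commutative 3-dimensional algebra of nil-rank `2` is isotopic
to the Jordan algebra `J₂` of a nondegenerate symmetric bilinear form on a
2-dimensional space (realized as `C(1, 0, 0)`). -/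
theorem stmt15 {F : Type*} [Field F] [IsAlgClosed F] (hchar : (2 : F) ≠ 0)
    {A : Type*} [AddCommGroup A] [Module F A]
    (m : A →ₗ[F] A →ₗ[F] A)
    (hdim : Module.finrank F A = 3)
    (hcomm : ∀ u v : A, m u v = m v u)
    (e : A) (hunit : ∀ u : A, m e u = u ∧ m u e = u)
    (hsimple : IsSimpleAlg F (fun u v : A => m u v))
    (hnil : HasNilRank F (fun u v : A => m u v) 2)
    {B : Type*} [AddCommGroup B] [Module F B]
    (m' : B →ₗ[F] B →ₗ[F] B) (e' x' y' : B)
    (hJ : IsCAlg F m' 1 0 0 e' x' y') :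
    Isotopic F (fun u v : A => m u v) (fun u v : B => m' u v) := by
    classical
  -- unpack hypotheses
  obtain ⟨hJli, hJspan, hJl, hJr, hJxx, hJyy, hJxy, hJyx⟩ := hJ
  have hxy' : m' x' y' = e' := by rw [hJxy]; module
  have hyx' : m' y' x' = e' := by rw [hJyx]; module
  obtain ⟨hmulne, hideal⟩ := hsimple
  obtain ⟨⟨v, hvli, hvsq⟩, hnil2⟩ := hnil
  set x : A := v 0 with hxdef
  set y : A := v 1 with hydef
  have hmxx : m x x = 0 := hvsq 0
  have hmyy : m y y = 0 := hvsq 1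
  -- basis of B
  have hrange' : Set.range ![e', x', y'] = {e', x', y'} := by
    simp only [Matrix.range_cons, Matrix.range_empty, Set.union_empty, Set.union_assoc,
      Set.singleton_union]
  have hspan' : ⊤ ≤ Submodule.span F (Set.range ![e', x', y']) := by
    rw [hrange', hJspan]
  let b' : Basis (Fin 3) F B := Basis.mk hJli hspan'
  have hb'0 : b' 0 = e' := by simp [b', Basis.mk_apply]
  have hb'1 : b' 1 = x' := by simp [b', Basis.mk_apply]
  have hb'2 : b' 2 = y' := by simp [b', Basis.mk_apply]
  have : FiniteDimensional F B := Module.Finite.of_basis b'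
  -- e ≠ 0
  have he0 : e ≠ 0 := by
    intro h
    have hx0 : x = 0 := by
      have := (hunit x).1
      rw [h] at this
      simpa using this.symm
    exact hvli.ne_zero 0 hx0
  -- x, y linearly independent as a pair
  have hpair : LinearIndependent F ![x, y] := by
    have : ![x, y] = v := by
      funext i; fin_cases i <;> rfl
    rw [this]; exact hvli
  -- e ∉ span {x, y}
  have henot : e ∉ Submodule.span F {x, y} := by
    intro hmem
    rw [Submodule.mem_span_pair] at hmem
    obtain ⟨a, c, hac⟩ := hmem
    have hee : m e e = e := (hunit e).1
    have hx : x = c • m x y := by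
      have hxe : m x e = x := (hunit x).2
      calc x = m x e := hxe.symm
        _ = m x (a • x + c • y) := by rw [hac]
        _ = a • m x x + c • m x y := by simp
        _ = c • m x y := by rw [hmxx]; simp
    have key : e = ((2 : F) * a) • x := by
      calc e = m e e := hee.symm
        _ = m (a • x + c • y) (a • x + c • y) := by rw [hac]
        _ = (a * a) • m x x + (a * c) • m x y + (c * a) • m y x + (c * c) • m y y := by
              simp [map_add, map_smul, smul_smul]; module
        _ = (a * c) • m x y + (c * a) • m x y := by
              rw [hmxx, hmyy, hcomm y x]; module
        _ = ((2 : F) * a) • (c • m x y) := by module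
        _ = ((2 : F) * a) • x := by rw [← hx]
    have he00 : e = 0 := by
      have : m e e = (((2:F)*a) * ((2:F)*a)) • m x x := by
        conv_lhs => rw [key]
        simp [map_smul, smul_smul]
      rw [hmxx, hee] at this
      simpa using this
    exact he0 he00
  -- basis of A
  have hli3 : LinearIndependent F ![e, x, y] := by
    have hc : ![e, x, y] = Fin.cons e ![x, y] := by
      funext i; fin_cases i <;> rfl
    rw [hc, linearIndependent_fin_cons]
    refine ⟨hpair, ?_⟩
    have : Set.range ![x, y] = {x, y} := by
      simp only [Matrix.range_cons, Matrix.range_empty, Set.union_empty, Set.singleton_union]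
    rw [this]; exact henot
  have hcard : Fintype.card (Fin 3) = Module.finrank F A := by simp [hdim]
  let b : Basis (Fin 3) F A := basisOfLinearIndependentOfCardEqFinrank hli3 hcard
  have hb : ⇑b = ![e, x, y] := coe_basisOfLinearIndependentOfCardEqFinrank hli3 hcard
  have hb0 : b 0 = e := by rw [hb]; rfl
  have hb1 : b 1 = x := by rw [hb]; rfl
  have hb2 : b 2 = y := by rw [hb]; rfl
  -- structure constants
  set α : F := b.repr (m x y) 0 with hα0
  set β : F := b.repr (m x y) 1 with hβ0
  set γ : F := b.repr (m x y) 2 with hγ0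
  have hw : m x y = α • e + β • x + γ • y := by
    have := b.sum_repr (m x y)
    rw [Fin.sum_univ_three, hb0, hb1, hb2] at this
    exact this.symm
  -- α ≠ 0 by simplicity
  have hxne : x ≠ 0 := hvli.ne_zero 0
  have hα : α ≠ 0 := by
    intro h0
    set I : Submodule F A := Submodule.span F {x, y} with hI
    have hxI : x ∈ I := Submodule.subset_span (by simp)
    have hyI : y ∈ I := Submodule.subset_span (by simp)
    have hwI : m x y ∈ I := by
      rw [hw, h0, zero_smul, zero_add]
      exact I.add_mem (I.smul_mem β hxI) (I.smul_mem γ hyI)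
    have hax : ∀ a : A, m a x ∈ I := by
      intro a
      have ha := b.sum_repr a
      rw [Fin.sum_univ_three, hb0, hb1, hb2] at ha
      rw [← ha]
      have : m (b.repr a 0 • e + b.repr a 1 • x + b.repr a 2 • y) x
          = b.repr a 0 • m e x + b.repr a 1 • m x x + b.repr a 2 • m y x := by
        simp [map_add, map_smul]
      rw [this, (hunit x).1, hmxx, hcomm y x]
      exact I.add_mem (I.add_mem (I.smul_mem _ hxI) (by simp)) (I.smul_mem _ hwI)
    have hay : ∀ a : A, m a y ∈ I := by
      intro a
      have ha := b.sum_repr a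
      rw [Fin.sum_univ_three, hb0, hb1, hb2] at ha
      rw [← ha]
      have : m (b.repr a 0 • e + b.repr a 1 • x + b.repr a 2 • y) y
          = b.repr a 0 • m e y + b.repr a 1 • m x y + b.repr a 2 • m y y := by
        simp [map_add, map_smul]
      rw [this, (hunit y).1, hmyy]
      exact I.add_mem (I.add_mem (I.smul_mem _ hyI) (I.smul_mem _ hwI)) (by simp)
    have hIideal : IsIdeal F (fun u v : A => m u v) I := by
      intro a u hu
      rw [Submodule.mem_span_pair] at hu
      obtain ⟨c, d, hcd⟩ := hu
      have h1 : m a u ∈ I := by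
        rw [← hcd]
        have : m a (c • x + d • y) = c • m a x + d • m a y := by simp
        rw [this]
        exact I.add_mem (I.smul_mem _ (hax a)) (I.smul_mem _ (hay a))
      exact ⟨h1, by show m u a ∈ I; rw [hcomm u a]; exact h1⟩
    rcases hideal I hIideal with hbot | htop
    · rw [hbot, Submodule.mem_bot] at hxI
      exact hxne hxI
    · rw [htop] at henot
      exact henot Submodule.mem_top
  -- 2α + βγ ≠ 0 by nil-rank 2
  have hbad : 2 * α + β * γ ≠ 0 := by
    intro hbg
    have hβ : β ≠ 0 := by
      intro h
      rw [h, zero_mul, add_zero] at hbg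
      exact hα ((mul_eq_zero.mp hbg).resolve_left hchar)
    have hγ : γ ≠ 0 := by
      intro h
      rw [h, mul_zero, add_zero] at hbg
      exact hα ((mul_eq_zero.mp hbg).resolve_left hchar)
    set z : A := e + (-γ⁻¹) • x + (-β⁻¹) • y with hz
    have hzz : m z z = 0 := by
      have hexp : m z z = e + (2 * (-γ⁻¹)) • x + (2 * (-β⁻¹)) • y
          + (2 * (-γ⁻¹) * (-β⁻¹)) • (m x y) := by
        rw [hz]
        simp only [map_add, map_smul, LinearMap.add_apply, LinearMap.smul_apply,
          (hunit e).1, (hunit x).1, (hunit y).1, (hunit x).2, (hunit y).2,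
          hmxx, hmyy, hcomm y x]
        module
      rw [hexp, hw]
      match_scalars
      · field_simp
        linear_combination hbg
      · field_simp
        ring
      · field_simp
        ring
    have hzli : LinearIndependent F ![z, x, y] := by
      have hc : ![z, x, y] = Fin.cons z ![x, y] := by
        funext i; fin_cases i <;> rfl
      rw [hc, linearIndependent_fin_cons]
      refine ⟨hpair, ?_⟩
      have hr : Set.range ![x, y] = {x, y} := by
        simp only [Matrix.range_cons, Matrix.range_empty, Set.union_empty, Set.singleton_union]
      rw [hr]
      intro hmem
      apply henot
      have : e = z - (-γ⁻¹) • x - (-β⁻¹) • y := by rw [hz]; abel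
      rw [this]
      exact Submodule.sub_mem _ (Submodule.sub_mem _ hmem
        (Submodule.smul_mem _ _ (Submodule.subset_span (by simp))))
        (Submodule.smul_mem _ _ (Submodule.subset_span (by simp)))
    obtain ⟨i, hi⟩ := hnil2 ![z, x, y] hzli
    fin_cases i
    · exact hi hzz
    · exact hi hmxx
    · exact hi hmyy
  -- multiplication table in basis form
  have hb00 : m (b 0) (b 0) = b 0 := by rw [hb0]; exact (hunit e).1
  have hb01 : m (b 0) (b 1) = b 1 := by rw [hb0, hb1]; exact (hunit x).1
  have hb02 : m (b 0) (b 2) = b 2 := by rw [hb0, hb2]; exact (hunit y).1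
  have hb10 : m (b 1) (b 0) = b 1 := by rw [hb0, hb1]; exact (hunit x).2
  have hb20 : m (b 2) (b 0) = b 2 := by rw [hb0, hb2]; exact (hunit y).2
  have hb11 : m (b 1) (b 1) = 0 := by rw [hb1]; exact hmxx
  have hb22 : m (b 2) (b 2) = 0 := by rw [hb2]; exact hmyy
  have hb12 : m (b 1) (b 2) = α • b 0 + β • b 1 + γ • b 2 := by
    rw [hb0, hb1, hb2]; exact hw
  have hb21 : m (b 2) (b 1) = α • b 0 + β • b 1 + γ • b 2 := by
    rw [hb0, hb1, hb2, hcomm y x]; exact hw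
  -- square root
  obtain ⟨l, hl⟩ := IsAlgClosed.exists_pow_nat_eq ((2 * α + β * γ) / (2 * α ^ 2))
    (n := 2) (by norm_num)
  have hl2 : 2 * α ^ 2 * l ^ 2 = 2 * α + β * γ := by
    rw [hl]; field_simp
  have hlne : l ≠ 0 := by
    intro h
    apply hbad
    rw [h] at hl2
    simpa using hl2.symm
  set cμ : F := -(β / (2 * α)) with hcμ
  set cν : F := -(γ / (2 * α)) with hcν
  set p : B := l • e' + cμ • x' + cν • y' with hp
  -- products with p
  have hpx : m' p x' = cν • e' + l • x' := by
    rw [hp]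
    simp only [map_add, map_smul, LinearMap.add_apply, LinearMap.smul_apply,
      hJl, hJr, hJxx, hJyy, hxy', hyx']
    module
  have hpy : m' p y' = cμ • e' + l • y' := by
    rw [hp]
    simp only [map_add, map_smul, LinearMap.add_apply, LinearMap.smul_apply,
      hJl, hJr, hJxx, hJyy, hxy', hyx']
    module
  have hpp : m' p p = (l ^ 2 + 2 * cμ * cν) • e' + (2 * l * cμ) • x' + (2 * l * cν) • y' := by
    conv_lhs => rw [hp]
    simp only [map_add, map_smul, LinearMap.add_apply, LinearMap.smul_apply,
      hJl, hJr, hJxx, hJyy, hxy', hyx', hp]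
    match_scalars <;> ring
  -- scalar nondegeneracy facts
  have h1α : α * (l ^ 2 - 2 * cμ * cν) = 1 := by
    rw [hcμ, hcν]
    field_simp
    linear_combination hl2
  have hμ : 2 * α * cμ + β = 0 := by
    rw [hcμ]; field_simp; ring
  have hν : 2 * α * cν + γ = 0 := by
    rw [hcν]; field_simp; ring
  have hmain1 : α * (l ^ 2 + 2 * cμ * cν) + β * cν + γ * cμ = 1 := by
    linear_combination h1α + cν * hμ + cμ * hν
  have hdne : l ^ 2 - 2 * cμ * cν ≠ 0 := by
    intro h
    rw [h, mul_zero] at h1α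
    exact one_ne_zero h1α.symm
  set d : F := l * (l ^ 2 - 2 * cμ * cν) with hd
  have hdn : d ≠ 0 := mul_ne_zero hlne hdne
  -- the equivalence σ : A ≃ B sending the basis to the basis
  set σ : A ≃ₗ[F] B := b.equiv b' (Equiv.refl _) with hσ
  have hσ0 : σ (b 0) = b' 0 := b.equiv_apply 0 b' (Equiv.refl _)
  have hσ1 : σ (b 1) = b' 1 := b.equiv_apply 1 b' (Equiv.refl _)
  have hσ2 : σ (b 2) = b' 2 := b.equiv_apply 2 b' (Equiv.refl _)
  -- the equivalence T : B ≃ B, e' ↦ p, x' ↦ x', y' ↦ y'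
  set Tf : B →ₗ[F] B := b'.constr F ![p, x', y'] with hTf
  set Tg : B →ₗ[F] B := b'.constr F ![l⁻¹ • (e' - cμ • x' - cν • y'), x', y'] with hTg
  have hTf0 : Tf (b' 0) = p := by rw [hTf, b'.constr_basis]; rfl
  have hTf1 : Tf (b' 1) = x' := by rw [hTf, b'.constr_basis]; rfl
  have hTf2 : Tf (b' 2) = y' := by rw [hTf, b'.constr_basis]; rfl
  have hTg0 : Tg (b' 0) = l⁻¹ • (e' - cμ • x' - cν • y') := by rw [hTg, b'.constr_basis]; rfl
  have hTg1 : Tg (b' 1) = x' := by rw [hTg, b'.constr_basis]; rfl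
  have hTg2 : Tg (b' 2) = y' := by rw [hTg, b'.constr_basis]; rfl
  have hTfx : Tf x' = x' := by conv_lhs => rw [← hb'1, hTf1]
  have hTfy : Tf y' = y' := by conv_lhs => rw [← hb'2, hTf2]
  have hTfe : Tf e' = p := by rw [← hb'0]; exact hTf0
  have hTgx : Tg x' = x' := by conv_lhs => rw [← hb'1, hTg1]
  have hTgy : Tg y' = y' := by conv_lhs => rw [← hb'2, hTg2]
  have hTcomp : Tf.comp Tg = LinearMap.id := by
    apply b'.ext
    intro i
    fin_cases i
    · rw [LinearMap.comp_apply, LinearMap.id_apply]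
      show Tf (Tg (b' 0)) = b' 0
      rw [hTg0, map_smul, map_sub, map_sub, map_smul, map_smul, hTfe, hTfx, hTfy,
        hb'0, hp]
      match_scalars <;> field_simp <;> ring
    · rw [LinearMap.comp_apply, LinearMap.id_apply]
      show Tf (Tg (b' 1)) = b' 1
      rw [hTg1, hb'1, hTfx]
    · rw [LinearMap.comp_apply, LinearMap.id_apply]
      show Tf (Tg (b' 2)) = b' 2
      rw [hTg2, hb'2, hTfy]
  set T : B ≃ₗ[F] B := LinearEquiv.ofLinear Tf Tg hTcomp (comp_id_comm hTcomp) with hT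
  -- the equivalence E : B ≃ B given by multiplication by p
  set Ef : B →ₗ[F] B := m' p with hEf
  set w0 : B := d⁻¹ • ((l ^ 2) • e' + (-(cμ * l)) • x' + (-(cν * l)) • y') with hw0
  set w1 : B := d⁻¹ • ((-(cν * l)) • e' + (l ^ 2 - cμ * cν) • x' + (cν ^ 2) • y') with hw1
  set w2 : B := d⁻¹ • ((-(cμ * l)) • e' + (cμ ^ 2) • x' + (l ^ 2 - cμ * cν) • y') with hw2
  set Eg : B →ₗ[F] B := b'.constr F ![w0, w1, w2] with hEg
  have hEg0 : Eg (b' 0) = w0 := by rw [hEg, b'.constr_basis]; rfl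
  have hEg1 : Eg (b' 1) = w1 := by rw [hEg, b'.constr_basis]; rfl
  have hEg2 : Eg (b' 2) = w2 := by rw [hEg, b'.constr_basis]; rfl
  have hEgx : Eg x' = w1 := by rw [← hb'1]; exact hEg1
  have hEgy : Eg y' = w2 := by rw [← hb'2]; exact hEg2
  have hEge : Eg e' = w0 := by rw [← hb'0]; exact hEg0
  have hpe : m' p e' = p := hJr p
  have hEcomp : Ef.comp Eg = LinearMap.id := by
    apply b'.ext
    intro i
    fin_cases i
    · rw [LinearMap.comp_apply, LinearMap.id_apply]
      show Ef (Eg (b' 0)) = b' 0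
      rw [hEg0, hw0, hEf, map_smul, map_add, map_add, map_smul, map_smul, map_smul,
        hpe, hpx, hpy, hb'0, hp]
      match_scalars <;> field_simp <;> ring
    · rw [LinearMap.comp_apply, LinearMap.id_apply]
      show Ef (Eg (b' 1)) = b' 1
      rw [hEg1, hw1, hEf, map_smul, map_add, map_add, map_smul, map_smul, map_smul,
        hpe, hpx, hpy, hb'1, hp]
      match_scalars <;> field_simp <;> ring
    · rw [LinearMap.comp_apply, LinearMap.id_apply]
      show Ef (Eg (b' 2)) = b' 2
      rw [hEg2, hw2, hEf, map_smul, map_add, map_add, map_smul, map_smul, map_smul,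
        hpe, hpx, hpy, hb'2, hp]
      match_scalars <;> field_simp <;> ring
  set E : B ≃ₗ[F] B := LinearEquiv.ofLinear Ef Eg hEcomp (comp_id_comm hEcomp) with hE
  -- assemble the isotopy
  set φ : A ≃ₗ[F] B := σ ≪≫ₗ T with hφ
  set ξ : A ≃ₗ[F] B := σ ≪≫ₗ (T ≪≫ₗ E) with hξ
  have hφ0 : φ (b 0) = p := by
    rw [hφ, LinearEquiv.trans_apply, hσ0]
    show Tf (b' 0) = p
    exact hTf0
  have hφ1 : φ (b 1) = x' := by
    rw [hφ, LinearEquiv.trans_apply, hσ1]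
    show Tf (b' 1) = x'
    exact hTf1
  have hφ2 : φ (b 2) = y' := by
    rw [hφ, LinearEquiv.trans_apply, hσ2]
    show Tf (b' 2) = y'
    exact hTf2
  have hξ0 : ξ (b 0) = m' p p := by
    rw [hξ, LinearEquiv.trans_apply, hσ0, LinearEquiv.trans_apply]
    show E (Tf (b' 0)) = m' p p
    rw [hTf0]
    show Ef p = m' p p
    rw [hEf]
  have hξ1 : ξ (b 1) = m' p x' := by
    rw [hξ, LinearEquiv.trans_apply, hσ1, LinearEquiv.trans_apply]
    show E (Tf (b' 1)) = m' p x'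
    rw [hTf1]
    show Ef x' = m' p x'
    rw [hEf]
  have hξ2 : ξ (b 2) = m' p y' := by
    rw [hξ, LinearEquiv.trans_apply, hσ2, LinearEquiv.trans_apply]
    show E (Tf (b' 2)) = m' p y'
    rw [hTf2]
    show Ef y' = m' p y'
    rw [hEf]
  -- the key identity on basis vectors
  have main : ∀ i j : Fin 3, m' (φ (b i)) (φ (b j)) = ξ (m (b i) (b j)) := by
    intro i j
    fin_cases i <;> fin_cases j
    · rw [show ((⟨0, by omega⟩ : Fin 3)) = (0 : Fin 3) from rfl, hb00, hφ0, hξ0]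
    · rw [show ((⟨0, by omega⟩ : Fin 3)) = (0 : Fin 3) from rfl,
        show ((⟨1, by omega⟩ : Fin 3)) = (1 : Fin 3) from rfl, hb01, hφ0, hφ1, hξ1]
    · rw [show ((⟨0, by omega⟩ : Fin 3)) = (0 : Fin 3) from rfl,
        show ((⟨2, by omega⟩ : Fin 3)) = (2 : Fin 3) from rfl, hb02, hφ0, hφ2, hξ2]
    · rw [show ((⟨0, by omega⟩ : Fin 3)) = (0 : Fin 3) from rfl,
        show ((⟨1, by omega⟩ : Fin 3)) = (1 : Fin 3) from rfl, hb10, hφ0, hφ1, hξ1, hp]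
      simp only [map_add, map_smul, LinearMap.add_apply, LinearMap.smul_apply,
        hJl, hJr, hJxx, hJyy, hxy', hyx']
    · rw [show ((⟨1, by omega⟩ : Fin 3)) = (1 : Fin 3) from rfl, hb11, hφ1, map_zero, hJxx]
    · rw [show ((⟨1, by omega⟩ : Fin 3)) = (1 : Fin 3) from rfl,
        show ((⟨2, by omega⟩ : Fin 3)) = (2 : Fin 3) from rfl, hb12, hφ1, hφ2, hxy',
        map_add, map_add, map_smul, map_smul, map_smul, hξ0, hξ1, hξ2, hpp, hpx, hpy]
      match_scalars
      · linear_combination -hmain1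
      · linear_combination (-l) * hμ
      · linear_combination (-l) * hν
    · rw [show ((⟨0, by omega⟩ : Fin 3)) = (0 : Fin 3) from rfl,
        show ((⟨2, by omega⟩ : Fin 3)) = (2 : Fin 3) from rfl, hb20, hφ0, hφ2, hξ2, hp]
      simp only [map_add, map_smul, LinearMap.add_apply, LinearMap.smul_apply,
        hJl, hJr, hJxx, hJyy, hxy', hyx']
    · rw [show ((⟨1, by omega⟩ : Fin 3)) = (1 : Fin 3) from rfl,
        show ((⟨2, by omega⟩ : Fin 3)) = (2 : Fin 3) from rfl, hb21, hφ1, hφ2, hyx',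
        map_add, map_add, map_smul, map_smul, map_smul, hξ0, hξ1, hξ2, hpp, hpx, hpy]
      match_scalars
      · linear_combination -hmain1
      · linear_combination (-l) * hμ
      · linear_combination (-l) * hν
    · rw [show ((⟨2, by omega⟩ : Fin 3)) = (2 : Fin 3) from rfl, hb22, hφ2, map_zero, hJyy]
  -- conclude by bilinearity
  have hbil : m'.compl₁₂ (φ : A →ₗ[F] B) (φ : A →ₗ[F] B) = m.compr₂ (ξ : A →ₗ[F] B) := by
    apply LinearMap.ext_basis b b
    intro i j
    simp only [LinearMap.compl₁₂_apply, LinearMap.compr₂_apply, LinearEquiv.coe_coe]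
    exact main i j
  refine ⟨φ, φ, ξ, ?_⟩
  intro u v
  have := LinearMap.congr_fun (LinearMap.congr_fun hbil u) v
  simpa only [LinearMap.compl₁₂_apply, LinearMap.compr₂_apply, LinearEquiv.coe_coe] using this
end

section
/- Let F be a field of characteristic ≠ 2. The cyclotomic algebra C₃ over F possesses a standard isotope isomorphic to the algebra C(−2). Explicitly, for c = x + y + z the right multiplication operator R_c is invertible and the principal isotope C₃^{(R_c⁻¹, R_c⁻¹)} is isomorphic to C(−2). -/
open Module

/-- Over a field of characteristic `≠ 2`, the cyclotomic algebra
`C₃` (basis `(x, y, z)` with `x² = y² = z² = 0`, `xy = z`, `yz = x`, `zx = y`)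
possesses a standard isotope isomorphic to `C(-2)`: for `c = x + y + z` the right
multiplication operator `R_c` is invertible and the principal isotope
`C₃^{(R_c⁻¹, R_c⁻¹)}` is isomorphic to `C(-2)`. -/
theorem stmt16 {F : Type*} [Field F] (hchar : (2 : F) ≠ 0)
    {A : Type*} [AddCommGroup A] [Module F A]
    (m : A →ₗ[F] A →ₗ[F] A) (x y z : A)
    (hbasis : LinearIndependent F ![x, y, z])
    (hspan : Submodule.span F {x, y, z} = ⊤)
    (hxx : m x x = 0) (hyy : m y y = 0) (hzz : m z z = 0)
    (hxy : m x y = z) (hyx : m y x = z)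
    (hyz : m y z = x) (hzy : m z y = x)
    (hzx : m z x = y) (hxz : m x z = y)
    {B : Type*} [AddCommGroup B] [Module F B]
    (m' : B →ₗ[F] B →ₗ[F] B) (e' x' y' : B)
    (hB : IsCAlg F m' (-2) (-2) (-2) e' x' y') :
    Function.Bijective (fun u : A => m u (x + y + z)) ∧
    ∃ φ : A ≃ₗ[F] A, (∀ u : A, φ (m u (x + y + z)) = u) ∧
      AlgIso F (fun u v : A => m (φ u) (φ v)) (fun u v : B => m' u v) := by
  obtain ⟨hindB, hspanB, hel, her, hx'x', hy'y', hx'y', hy'x'⟩ := hB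
  set f : A →ₗ[F] A := m.flip (x + y + z) with hf
  have hfx : f x = y + z := by
    simp [hf, LinearMap.flip_apply, hxx, hxy, hxz]; abel
  have hfy : f y = x + z := by
    simp [hf, LinearMap.flip_apply, hyy, hyx, hyz]; abel
  have hfz : f z = x + y := by
    simp [hf, LinearMap.flip_apply, hzz, hzx, hzy]; abel
  have hsp : ⊤ ≤ Submodule.span F (Set.range ![x, y, z]) := by
    rw [show Set.range ![x,y,z] = {x,y,z} by
      ext w; simp [Matrix.range_cons, Matrix.range_empty]; tauto]
    exact hspan.ge
  set bA : Basis (Fin 3) F A := Basis.mk hbasis hsp with hbA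
  have hbA0 : bA 0 = x := by simp [hbA]
  have hbA1 : bA 1 = y := by simp [hbA]
  have hbA2 : bA 2 = z := by simp [hbA]
  set g : A →ₗ[F] A := (2:F)⁻¹ • (f - LinearMap.id) with hg
  have hff : f ∘ₗ f = f + (2:F) • LinearMap.id := by
    apply bA.ext
    intro i
    fin_cases i <;>
      simp [hbA0, hbA1, hbA2, hfx, hfy, hfz, map_add, two_smul] <;> abel
  have hffu : ∀ u, f (f u) = f u + (2:F) • u := fun u => by
    have := LinearMap.congr_fun hff u
    simpa using this
  have hgf : ∀ u, g (f u) = u := by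
    intro u
    simp [hg, hffu u, smul_smul, inv_mul_cancel₀ hchar]
  have hfg : ∀ u, f (g u) = u := by
    intro u
    simp [hg, map_smul, map_sub, hffu u, smul_smul, inv_mul_cancel₀ hchar]
  -- basis of B
  have hspB : ⊤ ≤ Submodule.span F (Set.range ![e', x', y']) := by
    rw [show Set.range ![e',x',y'] = {e',x',y'} by
      ext w; simp [Matrix.range_cons, Matrix.range_empty]; tauto]
    exact hspanB.ge
  set bB : Basis (Fin 3) F B := Basis.mk hindB hspB with hbB
  have hbB0 : bB 0 = e' := by simp [hbB]
  have hbB1 : bB 1 = x' := by simp [hbB]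
  have hbB2 : bB 2 = y' := by simp [hbB]
  -- sA : A → B, sB : B → A
  set sA : A →ₗ[F] B := bA.constr F
    ![(2:F)⁻¹ • (e' + x'), (2:F)⁻¹ • (e' + y'), -((2:F)⁻¹ • (e' + x' + y'))] with hsA
  set sB : B →ₗ[F] A := bB.constr F
    ![(2:F) • (x + y + z), (-2:F) • (y + z), (-2:F) • (x + z)] with hsB
  have hsAx : sA x = (2:F)⁻¹ • (e' + x') := by
    rw [← hbA0, hsA, Basis.constr_basis]; rfl
  have hsAy : sA y = (2:F)⁻¹ • (e' + y') := by
    rw [← hbA1, hsA, Basis.constr_basis]; rfl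
  have hsAz : sA z = -((2:F)⁻¹ • (e' + x' + y')) := by
    rw [← hbA2, hsA, Basis.constr_basis]; rfl
  have hsBe : sB e' = (2:F) • (x + y + z) := by
    rw [← hbB0, hsB, Basis.constr_basis]; rfl
  have hsBx : sB x' = (-2:F) • (y + z) := by
    rw [← hbB1, hsB, Basis.constr_basis]; rfl
  have hsBy : sB y' = (-2:F) • (x + z) := by
    rw [← hbB2, hsB, Basis.constr_basis]; rfl
  have hAB : sA ∘ₗ sB = LinearMap.id := by
    apply bB.ext
    intro i
    fin_cases i <;>
      simp [hbB0, hbB1, hbB2, hsBe, hsBx, hsBy, map_add, map_smul,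
        hsAx, hsAy, hsAz] <;>
      match_scalars <;> field_simp <;> ring
  have hBA : sB ∘ₗ sA = LinearMap.id := by
    apply bA.ext
    intro i
    fin_cases i <;>
      simp [hbA0, hbA1, hbA2, hsAx, hsAy, hsAz, map_add, map_smul,
        hsBe, hsBx, hsBy] <;>
      match_scalars <;> field_simp <;> ring
  have hge : g ((2:F) • (x + y + z)) = x + y + z := by
    simp [hg, map_add, map_smul, hfx, hfy, hfz, smul_sub, smul_add, smul_smul]
    match_scalars <;> field_simp <;> ring
  have hgX : g ((-2:F) • (y + z)) = (-2:F) • x := by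
    simp [hg, map_add, map_smul, hfx, hfy, hfz, smul_sub, smul_add, smul_smul]
    match_scalars <;> field_simp <;> ring
  have hgY : g ((-2:F) • (x + z)) = (-2:F) • y := by
    simp [hg, map_add, map_smul, hfx, hfy, hfz, smul_sub, smul_add, smul_smul]
    match_scalars <;> field_simp <;> ring
  have hfapp : ∀ u, f u = m u (x + y + z) := fun _ => rfl
  clear_value f g sA sB bA bB
  set φ : A ≃ₗ[F] A := LinearEquiv.ofLinear g f
    (by ext u; exact hgf u) (by ext u; exact hfg u) with hφ
  set ψ : A ≃ₗ[F] B := LinearEquiv.ofLinear sA sB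
    (hAB) (hBA) with hψ
  refine ⟨Function.bijective_iff_has_inverse.mpr
      ⟨g, fun u => by show g (m u (x + y + z)) = u; rw [← hfapp]; exact hgf u,
        fun u => by show m (g u) (x + y + z) = u; rw [← hfapp]; exact hfg u⟩,
    φ, fun u => by show g (m u (x + y + z)) = u; rw [← hfapp]; exact hgf u, ψ, ?_⟩
  -- bilinear equality
  have key : (m.compl₁₂ g g).compr₂ sA = m'.compl₁₂ sA sA := by
    apply LinearMap.ext_basis (bB.map ψ.symm) (bB.map ψ.symm)
    intro i j
    have hid : ∀ w : B, sA (sB w) = w := fun w => by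
      simpa using LinearMap.congr_fun hAB w
    simp only [Basis.map_apply, LinearMap.compr₂_apply, LinearMap.compl₁₂_apply]
    have hψs : ∀ w : B, (ψ.symm w : A) = sB w := fun _ => rfl
    rw [hψs, hψs, hid, hid]
    fin_cases i <;> fin_cases j
    all_goals
      simp only [Fin.isValue, Fin.zero_eta, Fin.mk_one, Fin.reduceFinMk, Matrix.cons_val_zero, Matrix.cons_val_one, Matrix.head_cons,
        Matrix.cons_val_two, Matrix.tail_cons, hbB0, hbB1, hbB2, hsBe, hsBx, hsBy,
        hge, hgX, hgY]
    all_goals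
      simp only [map_add, map_smul, LinearMap.add_apply, LinearMap.smul_apply,
        hxx, hyy, hzz, hxy, hyx, hyz, hzy, hzx, hxz,
        hel, her, hx'x', hy'y', hx'y', hy'x', smul_add, smul_smul,
        hsAx, hsAy, hsAz, smul_zero, smul_neg, map_neg, map_zero, neg_neg]
    all_goals try match_scalars
    all_goals try field_simp
    all_goals try ring
  intro u v
  have := LinearMap.congr_fun₂ key u v
  show sA (m (g u) (g v)) = m' (sA u) (sA v)
  simpa using this
end

section
/- Let F be an algebraically closed field of characteristic ≠ 2. Every simple commutative 3-dimensional algebra over F possessing a nil-basis (a basis consisting of nil-elements of index 2) has a standard isotope isomorphic to the algebra C(−2). -/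
open Module

/-- Over an algebraically closed field of characteristic `≠ 2`,
every simple commutative 3-dimensional algebra possessing a nil-basis (a basis of
nil-elements of index 2) has a standard isotope isomorphic to `C(-2)` (where
`C(ρ)` has `xy = yx = ρ·(1 + x + y)`). -/
theorem stmt17 {F : Type*} [Field F] [IsAlgClosed F] (hchar : (2 : F) ≠ 0)
    {A : Type*} [AddCommGroup A] [Module F A]
    (m : A →ₗ[F] A →ₗ[F] A)
    (hdim : Module.finrank F A = 3)
    (hcomm : ∀ u v : A, m u v = m v u)
    (hsimple : IsSimpleAlg F (fun u v : A => m u v))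
    (hnilbasis : ∃ v : Fin 3 → A, LinearIndependent F v ∧
      Submodule.span F (Set.range v) = ⊤ ∧ ∀ i, m (v i) (v i) = 0)
    {B : Type*} [AddCommGroup B] [Module F B]
    (m' : B →ₗ[F] B →ₗ[F] B) (e' x' y' : B)
    (hB : IsCAlg F m' (-2) (-2) (-2) e' x' y') :
    ∃ f g : A ≃ₗ[F] A, (∃ c : F, c ≠ 0 ∧ ∀ u : A, g u = c • f u) ∧
      AlgIso F (fun u v : A => m (f u) (g v)) (fun u v : B => m' u v) := by
  classical
  obtain ⟨n, hnli, hnsp, hnsq⟩ := hnilbasis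
  obtain ⟨hBli, hBsp, hel, her, hxx, hyy, hxy, hyx⟩ := hB
  haveI : FiniteDimensional F A := .of_finrank_pos (by rw [hdim]; norm_num)
  -- the products of the nil-basis
  set p := m (n 0) (n 1) with hp
  set q := m (n 0) (n 2) with hq
  set r := m (n 1) (n 2) with hr
  set I : Submodule F A := Submodule.span F {p, q, r} with hI
  have hbb : ∀ i j : Fin 3, m (n i) (n j) ∈ I := by
    intro i j
    have hpI : p ∈ I := Submodule.subset_span (by left; rfl)
    have hqI : q ∈ I := Submodule.subset_span (by right; left; rfl)
    have hrI : r ∈ I := Submodule.subset_span (by right; right; rfl)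
    fin_cases i <;> fin_cases j <;>
      simp only [Fin.isValue] <;>
      first
        | (rw [hnsq]; exact I.zero_mem)
        | exact hpI
        | exact hqI
        | exact hrI
        | (rw [hcomm]; first | exact hpI | exact hqI | exact hrI)
  have hall : ∀ a u : A, m a u ∈ I := by
    have h1 : ∀ (i : Fin 3) (u : A), m (n i) u ∈ I := by
      intro i u
      have hu : u ∈ Submodule.span F (Set.range n) := hnsp ▸ Submodule.mem_top
      have h2 := Submodule.apply_mem_span_image_of_mem_span (m (n i)) hu
      refine Submodule.span_le.mpr ?_ h2
      rintro _ ⟨_, ⟨j, rfl⟩, rfl⟩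
      exact hbb i j
    intro a u
    have ha : a ∈ Submodule.span F (Set.range n) := hnsp ▸ Submodule.mem_top
    have h2 := Submodule.apply_mem_span_image_of_mem_span (m.flip u) ha
    refine Submodule.span_le.mpr ?_ h2
    rintro _ ⟨_, ⟨j, rfl⟩, rfl⟩
    exact h1 j u
  have hItop : I = ⊤ := by
    rcases hsimple.2 I (fun a u _ => ⟨hall a u, hall u a⟩) with hbot | htop
    · exfalso
      obtain ⟨u, v, huv⟩ := hsimple.1
      exact huv (by simpa [hbot] using hall u v)
    · exact htop
  have hle : ⊤ ≤ Submodule.span F (Set.range ![p, q, r]) := by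
    rw [← hItop]
    refine Submodule.span_le.mpr ?_
    rintro w (rfl | rfl | rfl)
    · exact Submodule.subset_span ⟨0, rfl⟩
    · exact Submodule.subset_span ⟨1, rfl⟩
    · exact Submodule.subset_span ⟨2, rfl⟩
  have hcardA : Fintype.card (Fin 3) = Module.finrank F A := by rw [hdim]; rfl
  let bpqr : Basis (Fin 3) F A := basisOfTopLeSpanOfCardEqFinrank ![p, q, r] hle hcardA
  have hbpqr : ⇑bpqr = ![p, q, r] := coe_basisOfTopLeSpanOfCardEqFinrank _ _ _
  let bn : Basis (Fin 3) F A := Basis.mk hnli hnsp.ge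
  have hbn : ⇑bn = n := Basis.coe_mk _ _
  -- set up B
  have hBsp' : ⊤ ≤ Submodule.span F (Set.range ![e', x', y']) := by
    rw [← hBsp]
    refine Submodule.span_le.mpr ?_
    rintro w (rfl | rfl | rfl)
    · exact Submodule.subset_span ⟨0, rfl⟩
    · exact Submodule.subset_span ⟨1, rfl⟩
    · exact Submodule.subset_span ⟨2, rfl⟩
  let bB : Basis (Fin 3) F B := Basis.mk hBli hBsp'
  haveI : FiniteDimensional F B := Module.Finite.of_basis bB
  have hdimB : Fintype.card (Fin 3) = Module.finrank F B := by
    rw [Module.finrank_eq_card_basis bB]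
  set z' : B := e' + (2 : F)⁻¹ • x' + (2 : F)⁻¹ • y' with hz'
  set P : B := (-2 : F) • e' + (-2 : F) • x' + (-2 : F) • y' with hP
  set Q : B := -e' - y' with hQ
  set R : B := -e' - x' with hR
  have hxz : m' x' z' = Q := by
    rw [hz', map_add, map_add, map_smul, map_smul, her x', hxx, hxy, hQ]
    match_scalars <;> field_simp <;> ring
  have hzx : m' z' x' = Q := by
    rw [hz', map_add, map_add, map_smul, map_smul, LinearMap.add_apply,
      LinearMap.add_apply, LinearMap.smul_apply, LinearMap.smul_apply, hel x', hxx, hyx, hQ]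
    match_scalars <;> field_simp <;> ring
  have hyz : m' y' z' = R := by
    rw [hz', map_add, map_add, map_smul, map_smul, her y', hyy, hyx, hR]
    match_scalars <;> field_simp <;> ring
  have hzy : m' z' y' = R := by
    rw [hz', map_add, map_add, map_smul, map_smul, LinearMap.add_apply,
      LinearMap.add_apply, LinearMap.smul_apply, LinearMap.smul_apply, hel y', hyy, hxy, hR]
    match_scalars <;> field_simp <;> ring
  have hzz : m' z' z' = 0 := by
    have h1 : m' z' e' = z' := her z'
    rw [hz', map_add, map_add, map_smul, map_smul]
    rw [← hz', h1, hzx, hzy, hz', hQ, hR]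
    match_scalars <;> (try field_simp) <;> ring
  -- bases of B
  have hleB1 : ⊤ ≤ Submodule.span F (Set.range ![x', y', z']) := by
    rw [← hBsp]
    refine Submodule.span_le.mpr ?_
    have hx : x' ∈ Submodule.span F (Set.range ![x', y', z']) :=
      Submodule.subset_span ⟨0, rfl⟩
    have hy : y' ∈ Submodule.span F (Set.range ![x', y', z']) :=
      Submodule.subset_span ⟨1, rfl⟩
    have hz : z' ∈ Submodule.span F (Set.range ![x', y', z']) :=
      Submodule.subset_span ⟨2, rfl⟩
    rintro w (h | h | h) <;> rw [h]
    · have he : e' = z' - (2 : F)⁻¹ • x' - (2 : F)⁻¹ • y' := by rw [hz']; module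
      rw [he]
      exact Submodule.sub_mem _ (Submodule.sub_mem _ hz (Submodule.smul_mem _ _ hx))
        (Submodule.smul_mem _ _ hy)
    · exact hx
    · exact hy
  have hleB2 : ⊤ ≤ Submodule.span F (Set.range ![P, Q, R]) := by
    rw [← hBsp]
    refine Submodule.span_le.mpr ?_
    have hPm : P ∈ Submodule.span F (Set.range ![P, Q, R]) :=
      Submodule.subset_span ⟨0, rfl⟩
    have hQm : Q ∈ Submodule.span F (Set.range ![P, Q, R]) :=
      Submodule.subset_span ⟨1, rfl⟩
    have hRm : R ∈ Submodule.span F (Set.range ![P, Q, R]) :=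
      Submodule.subset_span ⟨2, rfl⟩
    rintro w (h | h | h) <;> rw [h]
    · have he : e' = (2 : F)⁻¹ • P - Q - R := by
        rw [hP, hQ, hR]; match_scalars <;> (try field_simp) <;> ring
      rw [he]
      exact Submodule.sub_mem _ (Submodule.sub_mem _ (Submodule.smul_mem _ _ hPm) hQm) hRm
    · have hx2 : x' = -((2 : F)⁻¹ • P) + Q := by
        rw [hP, hQ]; match_scalars <;> (try field_simp) <;> ring
      rw [hx2]
      exact Submodule.add_mem _ (Submodule.neg_mem _ (Submodule.smul_mem _ _ hPm)) hQm
    · have hy2 : y' = -((2 : F)⁻¹ • P) + R := by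
        rw [hP, hR]; match_scalars <;> (try field_simp) <;> ring
      rw [hy2]
      exact Submodule.add_mem _ (Submodule.neg_mem _ (Submodule.smul_mem _ _ hPm)) hRm
  let bxyz : Basis (Fin 3) F B := basisOfTopLeSpanOfCardEqFinrank ![x', y', z'] hleB1 hdimB
  have hbxyz : ⇑bxyz = ![x', y', z'] := coe_basisOfTopLeSpanOfCardEqFinrank _ _ _
  let bW : Basis (Fin 3) F B := basisOfTopLeSpanOfCardEqFinrank ![P, Q, R] hleB2 hdimB
  have hbW : ⇑bW = ![P, Q, R] := coe_basisOfTopLeSpanOfCardEqFinrank _ _ _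
  -- the maps
  let φ : A ≃ₗ[F] B := bpqr.equiv bW (Equiv.refl _)
  let χ : B ≃ₗ[F] A := bxyz.equiv bn (Equiv.refl _)
  let f : A ≃ₗ[F] A := φ.trans χ
  have hφp : φ p = P := by
    have h1 : bpqr 0 = p := by rw [hbpqr]; rfl
    have h2 : bW 0 = P := by rw [hbW]; rfl
    rw [← h1, ← h2]; exact bpqr.equiv_apply 0 bW _
  have hφq : φ q = Q := by
    have h1 : bpqr 1 = q := by rw [hbpqr]; rfl
    have h2 : bW 1 = Q := by rw [hbW]; rfl
    rw [← h1, ← h2]; exact bpqr.equiv_apply 1 bW _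
  have hφr : φ r = R := by
    have h1 : bpqr 2 = r := by rw [hbpqr]; rfl
    have h2 : bW 2 = R := by rw [hbW]; rfl
    rw [← h1, ← h2]; exact bpqr.equiv_apply 2 bW _
  have hχ : ∀ i : Fin 3, χ (bxyz i) = n i := by
    intro i
    have := bxyz.equiv_apply i bn (Equiv.refl _)
    rw [this, Equiv.refl_apply, hbn]
  have key : ∀ i j : Fin 3, φ (m (n i) (n j)) = m' (![x', y', z'] i) (![x', y', z'] j) := by
    intro i j
    fin_cases i <;> fin_cases j
    · show φ (m (n 0) (n 0)) = m' x' x'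
      rw [hnsq 0, map_zero, hxx]
    · show φ (m (n 0) (n 1)) = m' x' y'
      rw [← hp, hφp, hxy]
    · show φ (m (n 0) (n 2)) = m' x' z'
      rw [← hq, hφq, hxz]
    · show φ (m (n 1) (n 0)) = m' y' x'
      rw [hcomm, ← hp, hφp, hyx]
    · show φ (m (n 1) (n 1)) = m' y' y'
      rw [hnsq 1, map_zero, hyy]
    · show φ (m (n 1) (n 2)) = m' y' z'
      rw [← hr, hφr, hyz]
    · show φ (m (n 2) (n 0)) = m' z' x'
      rw [hcomm, ← hq, hφq, hzx]
    · show φ (m (n 2) (n 1)) = m' z' y'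
      rw [hcomm, ← hr, hφr, hzy]
    · show φ (m (n 2) (n 2)) = m' z' z'
      rw [hnsq 2, map_zero, hzz]
  -- the basis of A adapted to φ
  let bu : Basis (Fin 3) F A := bxyz.map φ.symm
  have hbu : ∀ i, bu i = φ.symm (bxyz i) := fun i => Basis.map_apply _ _ _
  have hφbu : ∀ i, φ (bu i) = bxyz i := by
    intro i; rw [hbu]; exact φ.apply_symm_apply _
  have hfbu : ∀ i, f (bu i) = n i := by
    intro i
    show χ (φ (bu i)) = n i
    rw [hφbu, hχ]
  have main : ((m.compl₁₂ (f : A →ₗ[F] A) (f : A →ₗ[F] A)).compr₂ (φ : A →ₗ[F] B))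
      = m'.compl₁₂ (φ : A →ₗ[F] B) (φ : A →ₗ[F] B) := by
    apply bu.ext; intro i
    apply bu.ext; intro j
    simp only [LinearMap.compr₂_apply, LinearMap.compl₁₂_apply, LinearEquiv.coe_coe]
    rw [hfbu, hfbu, hφbu, hφbu, key i j, hbxyz]
  refine ⟨f, f, ⟨1, one_ne_zero, fun u => (one_smul F _).symm⟩, φ, ?_⟩
  intro u v
  have h2 := LinearMap.congr_fun (LinearMap.congr_fun main u) v
  simpa only [LinearMap.compr₂_apply, LinearMap.compl₁₂_apply, LinearEquiv.coe_coe] using h2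
end

section
/- Let F be a field and n ≥ 2. The (n+1)-dimensional commutative algebra G_n over F is simple: its multiplication is nonzero and its only ideals are 0 and G_n. -/
open Module

set_option maxHeartbeats 0

/-- For `n ≥ 2`, the `(n+1)`-dimensional commutative algebra
`G_n` with basis `(x₁, …, x_n, e)` in which all products `x_i x_j` vanish,
`e² = e`, `x₁e = e + x₂`, `x_i e = x_i + x_{i+1}` for `2 ≤ i ≤ n − 1`, and
`x_n e = x_n + x₁`, is simple. (Indices are shifted down by one below:
`x i` is `x_{i+1}`.) -/
theorem stmt18 {F : Type*} [Field F] (n : ℕ) (hn : 2 ≤ n)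
    {A : Type*} [AddCommGroup A] [Module F A]
    (m : A →ₗ[F] A →ₗ[F] A) (x : Fin n → A) (e : A)
    (hcomm : ∀ u v : A, m u v = m v u)
    (hbasis : LinearIndependent F (Fin.snoc x e : Fin (n + 1) → A))
    (hspan : Submodule.span F (Set.range (Fin.snoc x e : Fin (n + 1) → A)) = ⊤)
    (hxx : ∀ i j, m (x i) (x j) = 0)
    (hee : m e e = e)
    (hfirst : m (x ⟨0, by omega⟩) e = e + x ⟨1, by omega⟩)
    (hmid : ∀ (i : ℕ) (h1 : 1 ≤ i) (h2 : i + 1 < n),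
      m (x ⟨i, by omega⟩) e = x ⟨i, by omega⟩ + x ⟨i + 1, h2⟩)
    (hlast : m (x ⟨n - 1, by omega⟩) e = x ⟨n - 1, by omega⟩ + x ⟨0, by omega⟩) :
    IsSimpleAlg F (fun u v : A => m u v) := by
  have hn0 : 0 < n := by omega
  have hn1 : 1 < n := by omega
  let b : Basis (Fin (n+1)) F A := Basis.mk hbasis hspan.ge
  have hb : ∀ i, b i = (Fin.snoc x e : Fin (n + 1) → A) i := Basis.mk_apply hbasis hspan.ge
  have hbx : ∀ (t : ℕ) (ht : t < n + 1) (h : t < n), b ⟨t, ht⟩ = x ⟨t, h⟩ := by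
    intro t ht h
    have hi : (⟨t, ht⟩ : Fin (n+1)) = Fin.castSucc ⟨t, h⟩ := rfl
    rw [hb, hi, Fin.snoc_castSucc]
  have hbe : ∀ (ht : n < n + 1), b ⟨n, ht⟩ = e := by
    intro ht
    have hi : (⟨n, ht⟩ : Fin (n+1)) = Fin.last n := rfl
    rw [hb, hi, Fin.snoc_last]
  have hrepr : ∀ i k : Fin (n+1), b.repr (b i) k = if i = k then 1 else 0 := by
    intro i k; rw [b.repr_self, Finsupp.single_apply]
  have hene : e ≠ 0 := by
    have := b.ne_zero ⟨n, by omega⟩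
    rwa [hbe] at this
  -- products of basis vectors with e, expressed in terms of b
  have hb0 : m (b ⟨0, by omega⟩) e = b ⟨n, by omega⟩ + b ⟨1, by omega⟩ := by
    rw [hbx 0 (by omega) hn0, hbe, hbx 1 (by omega) hn1]; exact hfirst
  have hbl : m (b ⟨n-1, by omega⟩) e = b ⟨n-1, by omega⟩ + b ⟨0, by omega⟩ := by
    rw [hbx (n-1) (by omega) (by omega), hbx 0 (by omega) hn0]; exact hlast
  have hbm : ∀ (t : ℕ) (h1 : 1 ≤ t) (h2 : t + 1 < n),
      m (b ⟨t, by omega⟩) e = b ⟨t, by omega⟩ + b ⟨t+1, by omega⟩ := by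
    intro t h1 h2
    rw [hbx t (by omega) (by omega), hbx (t+1) (by omega) h2]; exact hmid t h1 h2
  have hbee : m (b ⟨n, by omega⟩) e = b ⟨n, by omega⟩ := by
    rw [hbe]; exact hee
  -- coordinate identities for u ↦ m u e
  have hcn : ∀ u : A, b.repr (m u e) ⟨n, by omega⟩
      = b.repr u ⟨n, by omega⟩ + b.repr u ⟨0, by omega⟩ := by
    have key : (b.coord ⟨n, by omega⟩).comp (m.flip e)
        = b.coord ⟨n, by omega⟩ + b.coord ⟨0, by omega⟩ := by
      apply b.ext
      rintro ⟨t, ht⟩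
      simp only [LinearMap.comp_apply, LinearMap.flip_apply, LinearMap.add_apply]
      by_cases hT : t = n
      · subst hT
        rw [hbee]
        simp only [Basis.coord_apply, hrepr, Fin.mk.injEq]
        split_ifs <;> first | contradiction | (exfalso; omega) | norm_num
      · by_cases h0 : t = 0
        · subst h0
          rw [hb0]
          simp only [Basis.coord_apply, map_add, Finsupp.add_apply, hrepr, Fin.mk.injEq]
          split_ifs <;> first | contradiction | (exfalso; omega) | norm_num
        · by_cases hL : t = n - 1
          · subst hL
            rw [hbl]
            simp only [Basis.coord_apply, map_add, Finsupp.add_apply, hrepr, Fin.mk.injEq]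
            split_ifs <;> first | contradiction | (exfalso; omega) | norm_num
          · rw [hbm t (by omega) (by omega)]
            simp only [Basis.coord_apply, map_add, Finsupp.add_apply, hrepr, Fin.mk.injEq]
            split_ifs <;> first | contradiction | (exfalso; omega) | norm_num
    intro u
    have := LinearMap.congr_fun key u
    simpa only [LinearMap.comp_apply, LinearMap.flip_apply, LinearMap.add_apply,
      Basis.coord_apply] using this
  have hca : ∀ u : A, b.repr (m u e) ⟨0, by omega⟩ = b.repr u ⟨n-1, by omega⟩ := by
    have key : (b.coord ⟨0, by omega⟩).comp (m.flip e) = b.coord ⟨n-1, by omega⟩ := by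
      apply b.ext
      rintro ⟨t, ht⟩
      simp only [LinearMap.comp_apply, LinearMap.flip_apply]
      by_cases hT : t = n
      · subst hT
        rw [hbee]
        simp only [Basis.coord_apply, hrepr, Fin.mk.injEq]
        split_ifs <;> first | contradiction | (exfalso; omega) | norm_num
      · by_cases h0 : t = 0
        · subst h0
          rw [hb0]
          simp only [Basis.coord_apply, map_add, Finsupp.add_apply, hrepr, Fin.mk.injEq]
          split_ifs <;> first | contradiction | (exfalso; omega) | norm_num
        · by_cases hL : t = n - 1
          · subst hL
            rw [hbl]
            simp only [Basis.coord_apply, map_add, Finsupp.add_apply, hrepr, Fin.mk.injEq]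
            split_ifs <;> first | contradiction | (exfalso; omega) | norm_num
          · rw [hbm t (by omega) (by omega)]
            simp only [Basis.coord_apply, map_add, Finsupp.add_apply, hrepr, Fin.mk.injEq]
            split_ifs <;> first | contradiction | (exfalso; omega) | norm_num
    intro u
    have := LinearMap.congr_fun key u
    simpa only [LinearMap.comp_apply, LinearMap.flip_apply, Basis.coord_apply] using this
  have hck : ∀ (s : ℕ) (hs1 : 1 ≤ s) (hs2 : s < n) (u : A),
      b.repr (m u e) ⟨s, by omega⟩
        = b.repr u ⟨s-1, by omega⟩ + b.repr u ⟨s, by omega⟩ := by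
    intro s hs1 hs2
    have key : (b.coord ⟨s, by omega⟩).comp (m.flip e)
        = b.coord ⟨s-1, by omega⟩ + b.coord ⟨s, by omega⟩ := by
      apply b.ext
      rintro ⟨t, ht⟩
      simp only [LinearMap.comp_apply, LinearMap.flip_apply, LinearMap.add_apply]
      by_cases hT : t = n
      · subst hT
        rw [hbee]
        simp only [Basis.coord_apply, hrepr, Fin.mk.injEq]
        split_ifs <;> first | contradiction | (exfalso; omega) | norm_num
      · by_cases h0 : t = 0
        · subst h0
          rw [hb0]
          simp only [Basis.coord_apply, map_add, Finsupp.add_apply, hrepr, Fin.mk.injEq]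
          split_ifs <;> first | contradiction | (exfalso; omega) | norm_num
        · by_cases hL : t = n - 1
          · subst hL
            rw [hbl]
            simp only [Basis.coord_apply, map_add, Finsupp.add_apply, hrepr, Fin.mk.injEq]
            split_ifs <;> first | contradiction | (exfalso; omega) | norm_num
          · rw [hbm t (by omega) (by omega)]
            simp only [Basis.coord_apply, map_add, Finsupp.add_apply, hrepr, Fin.mk.injEq]
            split_ifs <;> first | contradiction | (exfalso; omega) | norm_num
    intro u
    have := LinearMap.congr_fun key u
    simpa only [LinearMap.comp_apply, LinearMap.flip_apply, LinearMap.add_apply,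
      Basis.coord_apply] using this
  constructor
  · exact ⟨e, e, by simpa [hee] using hene⟩
  intro I hId
  by_cases hc : ∀ u ∈ I, b.repr u ⟨n, by omega⟩ = 0
  · -- Case 2: every element of I has zero e-coefficient; show I = ⊥
    left
    have hc0 : ∀ u ∈ I, b.repr u ⟨0, by omega⟩ = 0 := by
      intro u hu
      have hmu : m u e ∈ I := (hId e u hu).2
      have h1 := hcn u
      rw [hc _ hmu, hc u hu, zero_add] at h1
      exact h1.symm
    have hdown : ∀ (d t : ℕ), 1 ≤ t → ∀ (h : t < n), n - t ≤ d →
        ∀ u ∈ I, b.repr u ⟨t, by omega⟩ = 0 := by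
      intro d
      induction d with
      | zero => intro t h1 h hle; omega
      | succ d ih =>
        intro t h1 h hle u hu
        have hmu : m u e ∈ I := (hId e u hu).2
        by_cases hL : t = n - 1
        · subst hL
          have h2 := hca u
          rw [hc0 _ hmu] at h2
          exact h2.symm
        · have h3 := hck (t+1) (by omega) (by omega) u
          simp only [Nat.add_sub_cancel] at h3
          have h4 := ih (t+1) (by omega) (by omega) (by omega) _ hmu
          have h5 := ih (t+1) (by omega) (by omega) (by omega) u hu
          rw [h4, h5, add_zero] at h3  -- careful direction
          exact h3.symm
    rw [Submodule.eq_bot_iff]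
    intro u hu
    have hres : b.repr u = 0 := by
      ext k
      obtain ⟨t, ht⟩ := k
      simp only [Finsupp.coe_zero, Pi.zero_apply]
      by_cases hT : t = n
      · subst hT; exact hc u hu
      · by_cases h0 : t = 0
        · subst h0; exact hc0 u hu
        · exact hdown n t (by omega) (by omega) (by omega) u hu
    have := b.repr.map_eq_zero_iff.mp hres
    exact this
  · -- Case 1: some element has nonzero e-coefficient; show I = ⊤
    right
    push_neg at hc
    obtain ⟨u, hu, hcu⟩ := hc
    -- m v (x j) = (coeff of e in v) • m e (x j)
    have hmux : ∀ (v : A) (j : Fin n), m v (x j) = b.repr v ⟨n, by omega⟩ • m e (x j) := by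
      intro v j
      have key : m.flip (x j) = (b.coord ⟨n, by omega⟩).smulRight (m e (x j)) := by
        apply b.ext
        rintro ⟨t, ht⟩
        simp only [LinearMap.flip_apply, LinearMap.smulRight_apply, Basis.coord_apply,
          hrepr, Fin.mk.injEq]
        by_cases hT : t = n
        · subst hT
          rw [hbe]
          simp [hrepr]
        · rw [hbx t ht (by omega)]
          rw [hxx]
          simp [hrepr, Fin.mk.injEq, hT]
      have := LinearMap.congr_fun key v
      simpa only [LinearMap.flip_apply, LinearMap.smulRight_apply, Basis.coord_apply] using this
    have hwx : ∀ j : Fin n, m (x j) e ∈ I := by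
      intro j
      have h1 : m u (x j) ∈ I := (hId (x j) u hu).2
      rw [hmux u j] at h1
      have h2 : (b.repr u ⟨n, by omega⟩)⁻¹ • (b.repr u ⟨n, by omega⟩ • m e (x j)) ∈ I :=
        I.smul_mem _ h1
      rw [inv_smul_smul₀ hcu] at h2
      rw [hcomm]
      exact h2
    have hwn : ∀ (t : ℕ) (h : t < n), m (x ⟨t, h⟩) e ∈ I := fun t h => hwx ⟨t, h⟩
    have w0 : e + x ⟨1, hn1⟩ ∈ I := by
      have := hwn 0 hn0
      rwa [hfirst] at this
    have wl : x ⟨n-1, by omega⟩ + x ⟨0, hn0⟩ ∈ I := by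
      have := hwn (n-1) (by omega)
      rwa [hlast] at this
    -- enough: all basis vectors in I
    suffices hall : (∀ (t : ℕ) (h : t < n), x ⟨t, h⟩ ∈ I) ∧ e ∈ I by
      rw [eq_top_iff, ← hspan]
      rw [Submodule.span_le]
      rintro - ⟨i, rfl⟩
      obtain ⟨t, ht⟩ := i
      by_cases hT : t = n
      · have hsn : (Fin.snoc x e : Fin (n+1) → A) ⟨t, ht⟩ = e := by
          have hi : (⟨t, ht⟩ : Fin (n+1)) = ⟨n, by omega⟩ := Fin.mk_eq_mk.mpr hT
          rw [← hb, hi, hbe]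
        rw [hsn]; exact hall.2
      · have h : t < n := by omega
        have hsn : (Fin.snoc x e : Fin (n+1) → A) ⟨t, ht⟩ = x ⟨t, h⟩ := by
          rw [← hb, hbx t ht h]
        rw [hsn]; exact hall.1 t h
    by_cases h2 : n = 2
    · -- n = 2
      have wl' : x ⟨1, hn1⟩ + x ⟨0, hn0⟩ ∈ I := by
        have hix : (⟨n-1, by omega⟩ : Fin n) = ⟨1, hn1⟩ := Fin.mk_eq_mk.mpr (by omega)
        rwa [hix] at wl
      have hL0 : m (e + x ⟨1, hn1⟩) e ∈ I := (hId e _ w0).2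
      have hval : m (e + x ⟨1, hn1⟩) e = e + (x ⟨1, hn1⟩ + x ⟨0, hn0⟩) := by
        have hix : (⟨1, hn1⟩ : Fin n) = ⟨n-1, by omega⟩ := Fin.mk_eq_mk.mpr (by omega)
        rw [map_add, LinearMap.add_apply, hee, hix, hlast]
      rw [hval] at hL0
      have heI : e ∈ I := by
        have := I.sub_mem hL0 wl'
        have heq : e + (x ⟨1, hn1⟩ + x ⟨0, hn0⟩) - (x ⟨1, hn1⟩ + x ⟨0, hn0⟩) = e := by abel
        rwa [heq] at this
      have hx1 : x ⟨1, hn1⟩ ∈ I := by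
        have := I.sub_mem w0 heI
        have heq : e + x ⟨1, hn1⟩ - e = x ⟨1, hn1⟩ := by abel
        rwa [heq] at this
      have hx0 : x ⟨0, hn0⟩ ∈ I := by
        have := I.sub_mem wl' hx1
        have heq : x ⟨1, hn1⟩ + x ⟨0, hn0⟩ - x ⟨1, hn1⟩ = x ⟨0, hn0⟩ := by abel
        rwa [heq] at this
      refine ⟨?_, heI⟩
      intro t ht
      have hcases : t = 0 ∨ t = 1 := by omega
      rcases hcases with rfl | rfl
      · exact hx0
      · exact hx1
    · -- n ≥ 3
      have h3 : 3 ≤ n := by omega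
      have hx2 : x ⟨2, by omega⟩ ∈ I := by
        have hL0 : m (e + x ⟨1, hn1⟩) e ∈ I := (hId e _ w0).2
        have hval : m (e + x ⟨1, hn1⟩) e = e + (x ⟨1, hn1⟩ + x ⟨2, by omega⟩) := by
          rw [map_add, LinearMap.add_apply, hee, hmid 1 (by omega) (by omega)]
        rw [hval] at hL0
        have := I.sub_mem hL0 w0
        have heq : e + (x ⟨1, hn1⟩ + x ⟨2, by omega⟩) - (e + x ⟨1, hn1⟩)
            = x ⟨2, by omega⟩ := by abel
        rwa [heq] at this
      have ind : ∀ t, 2 ≤ t → ∀ (h : t < n), x ⟨t, h⟩ ∈ I := by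
        intro t ht
        induction t, ht using Nat.le_induction with
        | base => intro h; exact hx2
        | succ t ht ih =>
          intro h
          have hxt : x ⟨t, by omega⟩ ∈ I := ih (by omega)
          have wt : x ⟨t, by omega⟩ + x ⟨t+1, h⟩ ∈ I := by
            have := hwn t (by omega)
            rwa [hmid t (by omega) h] at this
          have := I.sub_mem wt hxt
          have heq : x ⟨t, by omega⟩ + x ⟨t+1, h⟩ - x ⟨t, by omega⟩ = x ⟨t+1, h⟩ := by abel
          rwa [heq] at this
      have hxl : x ⟨n-1, by omega⟩ ∈ I := ind (n-1) (by omega) (by omega)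
      have hx0 : x ⟨0, hn0⟩ ∈ I := by
        have := I.sub_mem wl hxl
        have heq : x ⟨n-1, by omega⟩ + x ⟨0, hn0⟩ - x ⟨n-1, by omega⟩ = x ⟨0, hn0⟩ := by abel
        rwa [heq] at this
      have hx1 : x ⟨1, hn1⟩ ∈ I := by
        have w1 : x ⟨1, hn1⟩ + x ⟨2, by omega⟩ ∈ I := by
          have := hwn 1 hn1
          rwa [hmid 1 (by omega) (by omega)] at this
        have := I.sub_mem w1 hx2
        have heq : x ⟨1, hn1⟩ + x ⟨2, by omega⟩ - x ⟨2, by omega⟩ = x ⟨1, hn1⟩ := by abel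
        rwa [heq] at this
      have heI : e ∈ I := by
        have := I.sub_mem w0 hx1
        have heq : e + x ⟨1, hn1⟩ - x ⟨1, hn1⟩ = e := by abel
        rwa [heq] at this
      refine ⟨?_, heI⟩
      intro t ht
      by_cases h0 : t = 0
      · subst h0; exact hx0
      · by_cases h1 : t = 1
        · subst h1; exact hx1
        · exact ind t (by omega) ht
end

section
/- Let F be a field, n ≥ 2, and let A be a simple commutative (n+1)-dimensional algebra over F containing an n-dimensional linear subspace V with V·V = 0 (i.e. A is strongly degenerate). Then A is not isotopically simple: there exists a principal isotope of A that is not simple. Consequently, there exist simple finite-dimensional commutative algebras with a nonzero idempotent that are not isotopically simple. -/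
open Module

theorem partA (F : Type) [Field F] (n : ℕ) (hn : 2 ≤ n)
    (A : Type) [AddCommGroup A] [Module F A]
    (hdim : Module.finrank F A = n + 1)
    (m : A →ₗ[F] A →ₗ[F] A)
    (hcomm : ∀ u v : A, m u v = m v u)
    (hs : IsSimpleAlg F (fun u v : A => m u v))
    (hV : ∃ V : Submodule F A, Module.finrank F ↥V = n ∧ ∀ u ∈ V, ∀ v ∈ V, m u v = 0) :
    ∃ f g : A ≃ₗ[F] A, ¬ IsSimpleAlg F (fun u v : A => m (f u) (g v)) := by
  obtain ⟨V, hVdim, hVV⟩ := hV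
  have hfd : FiniteDimensional F A := Module.finite_of_finrank_pos (by rw [hdim]; omega)
  -- V ≠ ⊤
  have hVtop : V ≠ ⊤ := by
    intro h
    rw [h, finrank_top] at hVdim
    omega
  -- pick e ∉ V
  obtain ⟨e, he⟩ : ∃ e : A, e ∉ V := by
    by_contra h
    push_neg at h
    exact hVtop (Submodule.eq_top_iff'.mpr h)
  -- V ⊔ span {e} = ⊤
  have hsup : V ⊔ Submodule.span F {e} = ⊤ := by
    apply Submodule.eq_top_of_finrank_eq
    have hlt : V < V ⊔ Submodule.span F {e} := by
      refine lt_of_le_of_ne le_sup_left ?_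
      intro h
      exact he (h ▸ Submodule.mem_sup_right (Submodule.mem_span_singleton_self e))
    have h1 : finrank F ↥V < finrank F ↥(V ⊔ Submodule.span F {e}) :=
      Submodule.finrank_lt_finrank_of_lt hlt
    have h2 : finrank F ↥(V ⊔ Submodule.span F {e}) ≤ finrank F A :=
      Submodule.finrank_le _
    omega
  -- decomposition
  have hdec : ∀ b : A, ∃ c : F, ∃ w ∈ V, b = c • e + w := by
    intro b
    have hb : b ∈ V ⊔ Submodule.span F {e} := hsup ▸ Submodule.mem_top
    obtain ⟨w, hw, z, hz, hb⟩ := Submodule.mem_sup.mp hb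
    obtain ⟨c, rfl⟩ := Submodule.mem_span_singleton.mp hz
    exact ⟨c, w, hw, by rw [← hb]; abel⟩
  set U : Submodule F A := V.map (m e) with hU
  -- key: products land in U
  have hkey : ∀ b : A, ∀ u ∈ V, m b u ∈ U := by
    intro b u hu
    obtain ⟨c, w, hw, rfl⟩ := hdec b
    have : m (c • e + w) u = c • m e u := by
      rw [map_add, map_smul, LinearMap.add_apply, LinearMap.smul_apply, hVV w hw u hu, add_zero]
    rw [this]
    exact Submodule.smul_mem _ _ (Submodule.mem_map_of_mem hu)
  -- injectivity of m e on V
  have hinj : ∀ v ∈ V, m e v = 0 → v = 0 := by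
    intro v hv h0
    by_contra hne
    have hzero : ∀ a : A, m a v = 0 := by
      intro a
      obtain ⟨c, w, hw, rfl⟩ := hdec a
      rw [map_add, map_smul, LinearMap.add_apply, LinearMap.smul_apply, h0, hVV w hw v hv,
        smul_zero, add_zero]
    have hid : IsIdeal F (fun u v : A => m u v) (Submodule.span F {v}) := by
      intro a u hu
      obtain ⟨c, rfl⟩ := Submodule.mem_span_singleton.mp hu
      constructor
      · show m a (c • v) ∈ _
        rw [map_smul, hzero a, smul_zero]
        exact Submodule.zero_mem _
      · show m (c • v) a ∈ _
        rw [hcomm, map_smul, hzero a, smul_zero]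
        exact Submodule.zero_mem _
    rcases hs.2 _ hid with h | h
    · have hv2 : v ∈ Submodule.span F {v} := Submodule.mem_span_singleton_self v
      rw [h] at hv2
      exact hne ((Submodule.mem_bot F).mp hv2)
    · have := finrank_span_singleton (K := F) hne
      rw [h, finrank_top, hdim] at this
      omega
  -- finrank U = n
  have hUdim : finrank F ↥U = n := by
    have hker : Function.Injective ((m e).comp V.subtype) := by
      rw [← LinearMap.ker_eq_bot]
      rw [Submodule.eq_bot_iff]
      rintro ⟨x, hx⟩ h
      have : m e x = 0 := h
      exact Subtype.ext (hinj x hx this)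
    have := LinearMap.finrank_range_of_inj hker
    rw [LinearMap.range_comp, Submodule.range_subtype] at this
    rw [hU, this, hVdim]
  -- construct automorphism f with f(U) ⊆ V
  obtain ⟨U', hU'⟩ := Submodule.exists_isCompl U
  obtain ⟨V', hV'⟩ := Submodule.exists_isCompl V
  have hU'dim : finrank F ↥U' = finrank F ↥V' := by
    have h1 := Submodule.finrank_add_eq_of_isCompl hU'
    have h2 := Submodule.finrank_add_eq_of_isCompl hV'
    omega
  obtain ⟨e1⟩ := FiniteDimensional.nonempty_linearEquiv_of_finrank_eq
    (hUdim.trans hVdim.symm)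
  obtain ⟨e2⟩ := FiniteDimensional.nonempty_linearEquiv_of_finrank_eq hU'dim
  set f : A ≃ₗ[F] A :=
    (Submodule.prodEquivOfIsCompl U U' hU').symm.trans
      ((e1.prodCongr e2).trans (Submodule.prodEquivOfIsCompl V V' hV')) with hf
  have hfU : ∀ u ∈ U, f u ∈ V := by
    intro u hu
    have h1 : (Submodule.prodEquivOfIsCompl U U' hU').symm u = (⟨u, hu⟩, 0) := by
      rw [LinearEquiv.symm_apply_eq, Submodule.coe_prodEquivOfIsCompl']
      simp
    have : f u = ↑(e1 ⟨u, hu⟩) + ↑(e2 0) := by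
      rw [hf]
      simp only [LinearEquiv.trans_apply, h1]
      rw [Submodule.coe_prodEquivOfIsCompl']
      rfl
    rw [this, map_zero]
    simpa using (e1 ⟨u, hu⟩).2
  refine ⟨f, f, ?_⟩
  intro hsimp
  have hid : IsIdeal F (fun u v : A => m (f u) (f v)) U := by
    intro a u hu
    have hfu : f u ∈ V := hfU u hu
    refine ⟨hkey (f a) _ hfu, ?_⟩
    show m (f u) (f a) ∈ U
    rw [hcomm]
    exact hkey (f a) _ hfu
  rcases hsimp.2 U hid with h | h
  · rw [h, finrank_bot] at hUdim; omega
  · rw [h, finrank_top, hdim] at hUdim; omega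

def mB (F : Type) [Field F] : (Fin 3 → F) →ₗ[F] (Fin 3 → F) →ₗ[F] (Fin 3 → F) :=
  LinearMap.mk₂ F
    (fun u v => ![u 0 * v 0 + u 0 * v 2 + u 2 * v 0,
                  u 0 * v 2 + u 2 * v 0,
                  u 0 * v 1 + u 1 * v 0])
    (by intro u u' v; funext i; fin_cases i <;> simp <;> ring)
    (by intro c u v; funext i; fin_cases i <;> simp <;> ring)
    (by intro u v v'; funext i; fin_cases i <;> simp <;> ring)
    (by intro u c v; funext i; fin_cases i <;> simp <;> ring)

lemma mB_apply (F : Type) [Field F] (u v : Fin 3 → F) :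
    mB F u v = ![u 0 * v 0 + u 0 * v 2 + u 2 * v 0,
                 u 0 * v 2 + u 2 * v 0,
                 u 0 * v 1 + u 1 * v 0] := rfl

lemma mB_comm (F : Type) [Field F] (u v : Fin 3 → F) : mB F u v = mB F v u := by
  rw [mB_apply, mB_apply]
  funext i; fin_cases i <;> simp <;> ring

lemma span_top (F : Type) [Field F] (I : Submodule F (Fin 3 → F))
    (h0 : ![1,0,0] ∈ I) (h1 : ![0,1,0] ∈ I) (h2 : (![0,0,1] : Fin 3 → F) ∈ I) : I = ⊤ := by
  rw [eq_top_iff]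
  rintro x -
  have hx : x = x 0 • ![1,0,0] + x 1 • ![0,1,0] + x 2 • ![0,0,1] := by
    funext i; fin_cases i <;> simp
  rw [hx]
  exact add_mem (add_mem (Submodule.smul_mem _ _ h0) (Submodule.smul_mem _ _ h1))
    (Submodule.smul_mem _ _ h2)

lemma helperB (F : Type) [Field F] (I : Submodule F (Fin 3 → F))
    (hI : IsIdeal F (fun u v => mB F u v) I) (w : Fin 3 → F) (hw : w ∈ I) (hw0 : w 0 ≠ 0) :
    I = ⊤ := by
  set w' : Fin 3 → F := (w 0)⁻¹ • w with hw'
  have hw'I : w' ∈ I := Submodule.smul_mem _ _ hw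
  have hw'0 : w' 0 = 1 := by
    rw [hw']; simp [inv_mul_cancel₀ hw0]
  have h2 : (![0,0,1] : Fin 3 → F) ∈ I := by
    have : mB F ![0,1,0] w' ∈ I := (hI ![0,1,0] w' hw'I).1
    have heq : mB F ![0,1,0] w' = ![0,0,1] := by
      rw [mB_apply]
      funext i; fin_cases i <;> simp [hw'0]
    rwa [heq] at this
  have h110 : (![1,1,0] : Fin 3 → F) ∈ I := by
    have : mB F ![0,0,1] w' ∈ I := (hI ![0,0,1] w' hw'I).1
    have heq : mB F ![0,0,1] w' = ![1,1,0] := by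
      rw [mB_apply]
      funext i; fin_cases i <;> simp [hw'0]
    rwa [heq] at this
  have h101 : (![1,0,1] : Fin 3 → F) ∈ I := by
    have : mB F ![1,0,0] ![1,1,0] ∈ I := (hI ![1,0,0] ![1,1,0] h110).1
    have heq : mB F ![1,0,0] ![1,1,0] = ![1,0,1] := by
      rw [mB_apply]
      funext i; fin_cases i <;> simp
    rwa [heq] at this
  have h0 : (![1,0,0] : Fin 3 → F) ∈ I := by
    have := sub_mem h101 h2
    have heq : (![1,0,1] : Fin 3 → F) - ![0,0,1] = ![1,0,0] := by
      funext i; fin_cases i <;> simp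
    rwa [heq] at this
  have h1 : (![0,1,0] : Fin 3 → F) ∈ I := by
    have := sub_mem h110 h0
    have heq : (![1,1,0] : Fin 3 → F) - ![1,0,0] = ![0,1,0] := by
      funext i; fin_cases i <;> simp
    rwa [heq] at this
  exact span_top F I h0 h1 h2

lemma simpleB (F : Type) [Field F] : IsSimpleAlg F (fun u v : Fin 3 → F => mB F u v) := by
  constructor
  · refine ⟨![1,0,0], ![1,0,0], ?_⟩
    have heq : mB F ![1,0,0] ![1,0,0] = ![1,0,0] := by
      rw [mB_apply]; funext i; fin_cases i <;> simp
    show mB F ![1,0,0] ![1,0,0] ≠ 0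
    rw [heq]
    intro h
    have := congrFun h 0
    simp at this
  · intro I hI
    by_cases hbot : I = ⊥
    · exact Or.inl hbot
    right
    obtain ⟨u, hu, hune⟩ := (Submodule.ne_bot_iff I).mp hbot
    by_cases h0 : u 0 ≠ 0
    · exact helperB F I hI u hu h0
    push_neg at h0
    have hw : mB F ![1,0,0] u ∈ I := (hI ![1,0,0] u hu).1
    have hweq : mB F ![1,0,0] u = ![u 2, u 2, u 1] := by
      rw [mB_apply]; funext i; fin_cases i <;> simp [h0]
    rw [hweq] at hw
    by_cases h2 : u 2 ≠ 0
    · exact helperB F I hI ![u 2, u 2, u 1] hw (by simpa using h2)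
    push_neg at h2
    have h1 : u 1 ≠ 0 := by
      intro h1
      apply hune
      funext i; fin_cases i <;> simp [h0, h1, h2]
    have he1 : (![0,1,0] : Fin 3 → F) ∈ I := by
      have : (u 1)⁻¹ • u ∈ I := Submodule.smul_mem _ _ hu
      have heq : (u 1)⁻¹ • u = ![0,1,0] := by
        funext i; fin_cases i <;> simp [h0, h2, inv_mul_cancel₀ h1]
      rwa [heq] at this
    have he2 : (![0,0,1] : Fin 3 → F) ∈ I := by
      have : mB F ![1,0,0] ![0,1,0] ∈ I := (hI ![1,0,0] ![0,1,0] he1).1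
      have heq : mB F ![1,0,0] ![0,1,0] = ![0,0,1] := by
        rw [mB_apply]; funext i; fin_cases i <;> simp
      rwa [heq] at this
    have h110 : (![1,1,0] : Fin 3 → F) ∈ I := by
      have : mB F ![1,0,0] ![0,0,1] ∈ I := (hI ![1,0,0] ![0,0,1] he2).1
      have heq : mB F ![1,0,0] ![0,0,1] = ![1,1,0] := by
        rw [mB_apply]; funext i; fin_cases i <;> simp
      rwa [heq] at this
    have he0 : (![1,0,0] : Fin 3 → F) ∈ I := by
      have := sub_mem h110 he1
      have heq : (![1,1,0] : Fin 3 → F) - ![0,1,0] = ![1,0,0] := by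
        funext i; fin_cases i <;> simp
      rwa [heq] at this
    exact span_top F I he0 he1 he2

lemma degB (F : Type) [Field F] :
    ∃ V : Submodule F (Fin 3 → F), Module.finrank F ↥V = 2 ∧
      ∀ u ∈ V, ∀ v ∈ V, mB F u v = 0 := by
  refine ⟨LinearMap.ker (LinearMap.proj 0 : (Fin 3 → F) →ₗ[F] F), ?_, ?_⟩
  · have hsurj : Function.Surjective (LinearMap.proj 0 : (Fin 3 → F) →ₗ[F] F) := by
      intro c
      exact ⟨fun _ => c, rfl⟩
    have := LinearMap.finrank_range_add_finrank_ker
      (LinearMap.proj 0 : (Fin 3 → F) →ₗ[F] F)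
    rw [LinearMap.range_eq_top.mpr hsurj, finrank_top, Module.finrank_self,
      Module.finrank_fin_fun] at this
    omega
  · intro u hu v hv
    have hu0 : u 0 = 0 := hu
    have hv0 : v 0 = 0 := hv
    rw [mB_apply]
    funext i; fin_cases i <;> simp [hu0, hv0]


/-- (a) Let `A` be a simple commutative `(n+1)`-dimensional
algebra (`n ≥ 2`) containing an `n`-dimensional subspace `V` with `V·V = 0`
(a strongly degenerate algebra). Then `A` is not isotopically simple: some
principal isotope of `A` is not simple. (b) Consequently, there exist simple
finite-dimensional commutative algebras (e.g. 3-dimensional ones) with a nonzero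
idempotent that are not isotopically simple. -/
theorem stmt19 :
    (∀ (F : Type) [Field F], ∀ n : ℕ, 2 ≤ n →
      ∀ (A : Type) [AddCommGroup A] [Module F A],
        Module.finrank F A = n + 1 →
        ∀ (m : A →ₗ[F] A →ₗ[F] A),
          (∀ u v : A, m u v = m v u) →
          IsSimpleAlg F (fun u v : A => m u v) →
          (∃ V : Submodule F A, Module.finrank F ↥V = n ∧
            ∀ u ∈ V, ∀ v ∈ V, m u v = 0) →
          ∃ f g : A ≃ₗ[F] A,
            ¬ IsSimpleAlg F (fun u v : A => m (f u) (g v))) ∧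
    (∀ (F : Type) [Field F],
      ∃ m : (Fin 3 → F) →ₗ[F] (Fin 3 → F) →ₗ[F] (Fin 3 → F),
        (∀ u v : Fin 3 → F, m u v = m v u) ∧
        IsSimpleAlg F (fun u v : Fin 3 → F => m u v) ∧
        (∃ u : Fin 3 → F, u ≠ 0 ∧ m u u = u) ∧
        ∃ f g : (Fin 3 → F) ≃ₗ[F] (Fin 3 → F),
          ¬ IsSimpleAlg F (fun u v : Fin 3 → F => m (f u) (g v))) := by
  
  constructor
  · intro F _ n hn A _ _ hdim m hc hs hV
    exact partA F n hn A hdim m hc hs hV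
  · intro F _
    refine ⟨mB F, mB_comm F, simpleB F, ⟨![1,0,0], ?_, ?_⟩, ?_⟩
    · intro h
      have := congrFun h 0
      simp at this
    · show mB F ![1,0,0] ![1,0,0] = ![1,0,0]
      rw [mB_apply]; funext i; fin_cases i <;> simp
    · exact partA F 2 le_rfl (Fin 3 → F) (by rw [Module.finrank_fin_fun]) (mB F)
        (mB_comm F) (simpleB F) (degB F)
end
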